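/- arXiv:2603.06094 — 9 statements merged into one kernel-verified Lean document; each statement's English description precedes it below -/
import Mathlib

section
/- Let q, r, k be positive integers, set B = q(r-1)+k, g = gcd(q·r, k), ρ = q·r/g and κ = k/g, and let a : ℕ → ℚ and Y ∈ ℚ⟦X⟧ be as in the context. Then the identity X^{(q-1)·κ} = Y^κ · (1 - (k/r)·Y^{r-1}·X^{r-1+k})^{ρ+κ} holds in the formal power series ring ℚ⟦X⟧. -/
open PowerSeries Finset Nat

lemma aux_dpow (f : PowerSeries ℚ) (m : ℕ) :
    d⁄dX ℚ (f ^ (m + 1)) = ((m : ℚ⟦X⟧) + 1) * f ^ m * d⁄dX ℚ f := by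
  induction m with
  | zero => simp
  | succ m ih =>
    rw [pow_succ, Derivation.leibniz, ih, smul_eq_mul, smul_eq_mul]
    push_cast
    ring

lemma aux_mul_dpow (f : PowerSeries ℚ) (m : ℕ) :
    f * d⁄dX ℚ (f ^ m) = (m : ℚ⟦X⟧) * f ^ m * d⁄dX ℚ f := by
  cases m with
  | zero => simp
  | succ m =>
    rw [aux_dpow, pow_succ]
    push_cast
    ring

lemma aux_const (u : PowerSeries ℚ) (h : d⁄dX ℚ u = 0) :
    u = C (constantCoeff u) := by
  apply PowerSeries.derivative.ext (R := ℚ)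
  · simp [h]
  · simp

lemma aux_root (u : PowerSeries ℚ) (m : ℕ) (hm : m ≠ 0) (h1 : u ^ m = 1)
    (hc : constantCoeff u = 1) : u = 1 := by
  obtain ⟨m, rfl⟩ := Nat.exists_eq_succ_of_ne_zero hm
  have hd : d⁄dX ℚ (u ^ (m + 1)) = 0 := by rw [h1]; simp
  rw [aux_dpow] at hd
  have hu : u ≠ 0 := fun h => by simp [h] at hc
  have hC : ((m : ℚ⟦X⟧) + 1) ≠ 0 := by
    intro h
    have := congrArg (constantCoeff) h
    simp at this
    exact absurd this (by positivity)
  have hDu : d⁄dX ℚ u = 0 := by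
    rcases mul_eq_zero.1 hd with h | h
    · rcases mul_eq_zero.1 h with h | h
      · exact absurd h hC
      · exact absurd h (pow_ne_zero _ hu)
    · exact h
  rw [aux_const u hDu, hc, map_one]

lemma aux_pow_not_dvd (B : ℕ) (f : PowerSeries ℚ) (hf : ∀ n, ¬ B ∣ n → coeff n f = 0)
    (m n : ℕ) (hn : ¬ B ∣ n) : coeff n (f ^ m) = 0 := by
  rw [coeff_pow]
  apply Finset.sum_eq_zero
  intro l hl
  rw [Finset.mem_finsuppAntidiag] at hl
  have : ∃ i ∈ range m, ¬ B ∣ l i := by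
    by_contra hall
    push_neg at hall
    exact hn (hl.1 ▸ Finset.dvd_sum hall)
  obtain ⟨i, hi, hnd⟩ := this
  exact Finset.prod_eq_zero hi (hf _ hnd)

lemma aux_pow_dvd (B : ℕ) (hB : B ≠ 0) (e : ℕ → ℚ) (f : PowerSeries ℚ)
    (hfd : ∀ b, coeff (B * b) f = e b)
    (hf0 : ∀ n, ¬ B ∣ n → coeff n f = 0)
    (m s : ℕ) :
    coeff (B * s) (f ^ m) = ∑ t ∈ Finset.Nat.antidiagonalTuple m s, ∏ j, e (t j) := by
  rw [coeff_pow]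
  rw [← Finset.sum_filter_of_ne (p := fun l => ∀ i ∈ range m, B ∣ l i)
    (fun l hl hne => by
      intro i hi
      by_contra hnd
      exact hne (Finset.prod_eq_zero hi (hf0 _ hnd)))]
  refine Finset.sum_nbij' (i := fun l => fun j : Fin m => l j / B)
    (j := fun t => Finsupp.onFinset (range m)
      (fun i => if h : i < m then B * t ⟨i, h⟩ else 0)
      (fun i hi => by
        rw [Finset.mem_range]
        by_contra h
        simp [h] at hi)) ?_ ?_ ?_ ?_ ?_
  · intro l hl
    rw [Finset.mem_filter, Finset.mem_finsuppAntidiag] at hl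
    rw [Finset.Nat.mem_antidiagonalTuple]
    have : B * ∑ j : Fin m, l j / B = B * s := by
      rw [Finset.mul_sum]
      have : ∑ j : Fin m, B * (l (j : ℕ) / B) = ∑ j : Fin m, l (j : ℕ) := by
        apply Finset.sum_congr rfl
        intro j _
        exact Nat.mul_div_cancel' (hl.2 j (Finset.mem_range.2 j.isLt))
      rw [this, Fin.sum_univ_eq_sum_range, hl.1.1]
    exact Nat.eq_of_mul_eq_mul_left (Nat.pos_of_ne_zero hB) this
  · intro t ht
    rw [Finset.Nat.mem_antidiagonalTuple] at ht
    rw [Finset.mem_filter, Finset.mem_finsuppAntidiag]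
    refine ⟨⟨?_, Finsupp.support_onFinset_subset⟩, ?_⟩
    · rw [← Fin.sum_univ_eq_sum_range]
      have h1 : ∀ j : Fin m, j ∈ (Finset.univ : Finset (Fin m)) →
          (Finsupp.onFinset (range m)
            (fun i => if h : i < m then B * t ⟨i, h⟩ else 0)
            (fun i hi => by
              rw [Finset.mem_range]
              by_contra h
              simp [h] at hi) : ℕ →₀ ℕ) (j : ℕ) = B * t j := by
        intro j _
        simp [Finsupp.onFinset_apply, j.isLt]
      rw [Finset.sum_congr rfl h1, ← Finset.mul_sum, ht]
    · intro i hi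
      rw [Finsupp.onFinset_apply]
      split
      · exact Dvd.intro _ rfl
      · exact dvd_zero B
  · intro l hl
    rw [Finset.mem_filter, Finset.mem_finsuppAntidiag] at hl
    ext n
    rw [Finsupp.onFinset_apply]
    split
    · next h => exact Nat.mul_div_cancel' (hl.2 n (Finset.mem_range.2 h))
    · next h =>
      by_contra hne
      have := hl.1.2 (Finsupp.mem_support_iff.2 fun h0 => hne h0.symm)
      rw [Finset.mem_range] at this
      exact h this
  · intro t ht
    funext j
    simp only [Finsupp.onFinset_apply, j.isLt, dif_pos]
    exact Nat.mul_div_cancel_left _ (Nat.pos_of_ne_zero hB)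
  · intro l hl
    rw [Finset.mem_filter, Finset.mem_finsuppAntidiag] at hl
    rw [← Fin.prod_univ_eq_prod_range (fun i => coeff (l i) f)]
    apply Finset.prod_congr rfl
    intro j _
    have hd : B ∣ l (j : ℕ) := hl.2 j (Finset.mem_range.2 j.isLt)
    rw [← Nat.mul_div_cancel' hd] at *
    rw [hfd]
/-- Let `q, r, k` be positive integers, `B = q(r-1)+k`,
`g = gcd(q·r, k)`, `ρ = q·r/g`, `κ = k/g`.  Let `a : ℕ → ℚ` be the sequence of
genus-0 one-part `(k,r,q)`-leaky completed-cycles Hurwitz numbers, determined by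
`a 0 = 1/q` and the tropical cut-and-join recursion, and let
`Y = Σ_{b≥0} ((B·b+q)·a(b)/b!) · X^{B·b+q-1} ∈ ℚ⟦X⟧`.  Then
`X^{(q-1)·κ} = Y^κ · (1 - (k/r)·Y^{r-1}·X^{r-1+k})^{ρ+κ}` in `ℚ⟦X⟧`. -/
theorem leaky_one_part_spectral_curve
    (q r k : ℕ) (hq : 0 < q) (hr : 0 < r) (hk : 0 < k)
    (B : ℕ) (hB : B = q * (r - 1) + k)
    (g ρ κ : ℕ) (hg : g = Nat.gcd (q * r) k) (hρ : ρ = q * r / g) (hκ : κ = k / g)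
    (a : ℕ → ℚ)
    (ha0 : a 0 = 1 / q)
    (harec : ∀ b : ℕ, 1 ≤ b → a b = (1 / r : ℚ) *
      ∑ t ∈ Finset.Nat.antidiagonalTuple r (b - 1),
        (((b - 1)! : ℚ) / ∏ j, ((t j)! : ℚ)) *
          ∏ j, (((B * t j + q : ℕ) : ℚ) * a (t j)))
    (Y : PowerSeries ℚ)
    (hYcoeff : ∀ b : ℕ,
      PowerSeries.coeff (B * b + q - 1) Y = ((B * b + q : ℕ) : ℚ) * a b / (b)!)
    (hYzero : ∀ n : ℕ, (∀ b : ℕ, n ≠ B * b + q - 1) → PowerSeries.coeff n Y = 0) :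
    (PowerSeries.X : PowerSeries ℚ) ^ ((q - 1) * κ) =
      Y ^ κ *
        (1 - PowerSeries.C ((k : ℚ) / r) * Y ^ (r - 1) *
            PowerSeries.X ^ (r - 1 + k)) ^ (ρ + κ) := by
  -- destructure positivity
  obtain ⟨q₁, rfl⟩ : ∃ q₁, q = q₁ + 1 := ⟨q - 1, (Nat.succ_pred_eq_of_pos hq).symm⟩
  obtain ⟨r₁, rfl⟩ : ∃ r₁, r = r₁ + 1 := ⟨r - 1, (Nat.succ_pred_eq_of_pos hr).symm⟩
  obtain ⟨k₁, rfl⟩ : ∃ k₁, k = k₁ + 1 := ⟨k - 1, (Nat.succ_pred_eq_of_pos hk).symm⟩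
  have hB' : B = (q₁+1) * r₁ + (k₁+1) := by rw [hB]; simp
  have hBpos : 0 < B := by omega
  have hqQ : ((q₁+1) : ℚ) ≠ 0 := by positivity
  have hrQ : ((r₁+1) : ℚ) ≠ 0 := by positivity
  -- the series W and V
  set eW : ℕ → ℚ := fun b => ((B * b + (q₁+1) : ℕ) : ℚ) * a b / (b)! with heW
  set eV : ℕ → ℚ := fun b => a b / (b)! with heV
  set W : PowerSeries ℚ := PowerSeries.mk (fun n => if B ∣ n then eW (n / B) else 0) with hWdef
  set V : PowerSeries ℚ := PowerSeries.mk (fun n => if B ∣ n then eV (n / B) else 0) with hVdef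
  have hWc : ∀ b, coeff (B * b) W = eW b := by
    intro b
    rw [hWdef, coeff_mk, if_pos ⟨b, rfl⟩, Nat.mul_div_cancel_left _ hBpos]
  have hW0 : ∀ n, ¬ B ∣ n → coeff n W = 0 := by
    intro n hn
    rw [hWdef, coeff_mk, if_neg hn]
  have hVc : ∀ b, coeff (B * b) V = a b / (b)! := by
    intro b
    rw [hVdef, coeff_mk, if_pos ⟨b, rfl⟩, Nat.mul_div_cancel_left _ hBpos]
  -- Y = X^((q₁+1)-1) * W
  have hYc' : ∀ b, coeff (B * b + q₁) Y = ((B * b + (q₁+1) : ℕ) : ℚ) * a b / (b)! := by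
    intro b
    have := hYcoeff b
    have he : B * b + (q₁+1) - 1 = B * b + q₁ := by omega
    rwa [he] at this
  have hYz' : ∀ n, (∀ b, n ≠ B * b + q₁) → coeff n Y = 0 := by
    intro n h
    apply hYzero n
    intro b
    have he : B * b + (q₁+1) - 1 = B * b + q₁ := by omega
    rw [he]
    exact h b
  have hYW : Y = X ^ q₁ * W := by
    ext n
    rw [coeff_X_pow_mul']
    by_cases hex : ∃ b, n = B * b + q₁
    · obtain ⟨b, rfl⟩ := hex
      rw [hYc' b, if_pos (by omega : q₁ ≤ B * b + q₁), (by omega : B * b + q₁ - q₁ = B * b),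
        hWc b]
    · push_neg at hex
      rw [hYz' n hex]
      split_ifs with hle
      · symm
        apply hW0
        rintro ⟨c, hc⟩
        exact hex c (by omega)
      · rfl
  have hcast : ∀ m : ℕ, ((m : ℚ⟦X⟧)) = C (m : ℚ) := by
    intro m
    exact_mod_cast (map_natCast (C) m).symm
  have hcast' : ∀ m : ℕ, ((m : ℚ⟦X⟧) + 1) = C ((m : ℚ) + 1) := by
    intro m
    have := hcast (m + 1)
    push_cast at this
    exact this
  -- R1 : W = X * V' + (q₁+1) * V
  have hR1 : W = X * d⁄dX ℚ V + ((q₁+1) : ℚ⟦X⟧) * V := by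
    ext n
    rw [map_add, hcast' q₁, coeff_C_mul]
    cases n with
    | zero =>
      have h0 : coeff 0 (X * d⁄dX ℚ V) = 0 := by simp
      rw [h0, hVdef, hWdef, coeff_mk, coeff_mk, if_pos (dvd_zero B), if_pos (dvd_zero B),
        Nat.zero_div]
      simp only [heW, heV, Nat.factorial_zero]
      push_cast
      ring
    | succ m =>
      rw [coeff_succ_X_mul, coeff_derivative]
      by_cases hd : B ∣ (m + 1)
      · obtain ⟨c, hc⟩ := hd
        rw [hWdef, hVdef, coeff_mk, coeff_mk, if_pos ⟨c, hc⟩, if_pos ⟨c, hc⟩, hc,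
          Nat.mul_div_cancel_left _ hBpos]
        have hm : ((m : ℚ) + 1) = ((B * c : ℕ) : ℚ) := by exact_mod_cast congrArg Nat.cast hc
        rw [hm]
        simp only [heW, heV]
        push_cast
        ring
      · rw [hWdef, hVdef, coeff_mk, coeff_mk, if_neg hd, if_neg hd]
        ring
  -- R2 : (r₁+1) * (X * V') = B * (X^B * W^(r₁+1))
  have hR2 : ((r₁+1) : ℚ⟦X⟧) * (X * d⁄dX ℚ V) = (B : ℚ⟦X⟧) * (X ^ B * W ^ (r₁+1)) := by
    ext n
    rw [hcast' r₁, hcast B, coeff_C_mul, coeff_C_mul, coeff_X_pow_mul']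
    by_cases hd : B ∣ n
    · obtain ⟨c, rfl⟩ := hd
      cases c with
      | zero =>
        have h0 : coeff (B * 0) (X * d⁄dX ℚ V) = 0 := by simp
        rw [h0, if_neg (by omega), mul_zero, mul_zero]
      | succ b =>
        have hmulsucc : B * (b + 1) = B * b + B := Nat.mul_succ B b
        have hn1 : B * (b + 1) = (B * (b + 1) - 1) + 1 := by omega
        rw [hn1, coeff_succ_X_mul, coeff_derivative, ← hn1]
        rw [if_pos (by omega : B ≤ B * (b + 1)), (by omega : B * (b + 1) - B = B * b)]
        rw [aux_pow_dvd B (by omega) eW W hWc hW0 (r₁+1) b]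
        rw [hVc (b + 1)]
        have hm : (((B * (b + 1) - 1 : ℕ) : ℚ) + 1) = ((B * (b + 1) : ℕ) : ℚ) := by
          have : (B * (b + 1) - 1) + 1 = B * (b + 1) := by omega
          exact_mod_cast congrArg Nat.cast this
        rw [hm]
        have hb1 : 1 ≤ b + 1 := by omega
        have hrec := harec (b + 1) hb1
        rw [(by omega : b + 1 - 1 = b)] at hrec
        rw [hrec]
        rw [Finset.mul_sum, Finset.sum_div, Finset.sum_mul, Finset.mul_sum, Finset.mul_sum]
        apply Finset.sum_congr rfl
        intro t ht
        have hprod : ∏ j, eW (t j) =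
            (∏ j, (((B * t j + (q₁+1) : ℕ) : ℚ) * a (t j))) / ∏ j, ((t j)! : ℚ) := by
          simp only [heW]
          rw [← Finset.prod_div_distrib]
        rw [hprod]
        have hDne : (∏ j, ((t j)! : ℚ)) ≠ 0 := by
          apply Finset.prod_ne_zero_iff.2
          intro j _
          exact_mod_cast (t j).factorial_ne_zero
        have hfacne : ((b)! : ℚ) ≠ 0 := by exact_mod_cast b.factorial_ne_zero
        have hfac : (((b + 1))! : ℚ) = ((b : ℚ) + 1) * ((b)! : ℚ) := by
          rw [Nat.factorial_succ]
          push_cast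
          ring
        rw [hfac]
        push_cast
        field_simp
    · have h1 : coeff n (X * d⁄dX ℚ V) = 0 := by
        cases n with
        | zero => simp
        | succ m =>
          rw [coeff_succ_X_mul, coeff_derivative, hVdef, coeff_mk, if_neg hd, zero_mul]
      rw [h1, mul_zero]
      split_ifs with hle
      · have h2 : ¬ B ∣ (n - B) := by
          rintro ⟨c, hc⟩
          have hms : B * (c + 1) = B * c + B := by ring
          exact hd ⟨c + 1, by omega⟩
        rw [aux_pow_not_dvd B W hW0 (r₁+1) (n - B) h2, mul_zero]
      · rw [mul_zero]
  -- derivatives of constants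
  have hdB : d⁄dX ℚ ((B : ℚ⟦X⟧)) = 0 := by rw [hcast B]; exact derivative_C
  have hdq : d⁄dX ℚ ((q₁ : ℚ⟦X⟧) + 1) = 0 := by rw [hcast' q₁]; exact derivative_C
  have hdr : d⁄dX ℚ ((r₁ : ℚ⟦X⟧) + 1) = 0 := by rw [hcast' r₁]; exact derivative_C
  -- A1
  have hqV : d⁄dX ℚ (((q₁ : ℚ⟦X⟧) + 1) * V) = ((q₁ : ℚ⟦X⟧) + 1) * d⁄dX ℚ V := by
    rw [Derivation.leibniz, hdq, smul_zero, add_zero, smul_eq_mul]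
  have hA1 : d⁄dX ℚ W = d⁄dX ℚ (X * d⁄dX ℚ V) + ((q₁ : ℚ⟦X⟧) + 1) * d⁄dX ℚ V := by
    have h := congrArg (d⁄dX ℚ) hR1
    rwa [map_add, hqV] at h
  -- A2
  have hA2 : ((r₁ : ℚ⟦X⟧) + 1) * d⁄dX ℚ (X * d⁄dX ℚ V) =
      (B : ℚ⟦X⟧) * d⁄dX ℚ (X ^ B * W ^ (r₁ + 1)) := by
    have e1 : d⁄dX ℚ (((r₁ : ℚ⟦X⟧) + 1) * (X * d⁄dX ℚ V)) =
        ((r₁ : ℚ⟦X⟧) + 1) * d⁄dX ℚ (X * d⁄dX ℚ V) := by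
      rw [Derivation.leibniz, hdr, smul_zero, add_zero, smul_eq_mul]
    have e2 : d⁄dX ℚ ((B : ℚ⟦X⟧) * (X ^ B * W ^ (r₁ + 1))) =
        (B : ℚ⟦X⟧) * d⁄dX ℚ (X ^ B * W ^ (r₁ + 1)) := by
      rw [Derivation.leibniz, hdB, smul_zero, add_zero, smul_eq_mul]
    have h := congrArg (d⁄dX ℚ) hR2
    rwa [e1, e2] at h
  have hA3 : d⁄dX ℚ (X ^ B * W ^ (r₁ + 1)) =
      X ^ B * d⁄dX ℚ (W ^ (r₁ + 1)) + W ^ (r₁ + 1) * d⁄dX ℚ (X ^ B) := by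
    rw [Derivation.leibniz, smul_eq_mul, smul_eq_mul]
  have hA4 : d⁄dX ℚ (W ^ (r₁ + 1)) = ((r₁ : ℚ⟦X⟧) + 1) * W ^ r₁ * d⁄dX ℚ W := aux_dpow W r₁
  have hA5 : X * d⁄dX ℚ (X ^ B) = (B : ℚ⟦X⟧) * X ^ B := by
    have h := aux_mul_dpow X B
    rwa [derivative_X, mul_one] at h
  have hA6 : (B : ℚ⟦X⟧) + ((q₁ : ℚ⟦X⟧) + 1) =
      ((q₁ : ℚ⟦X⟧) + 1) * ((r₁ : ℚ⟦X⟧) + 1) + ((k₁ : ℚ⟦X⟧) + 1) := by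
    have h : B + (q₁ + 1) = (q₁ + 1) * (r₁ + 1) + (k₁ + 1) := by rw [hB']; ring
    have h2 := congrArg (fun m : ℕ => (m : ℚ⟦X⟧)) h
    push_cast at h2
    exact h2
  have hKEY : ((r₁ : ℚ⟦X⟧) + 1) * (X * d⁄dX ℚ W) =
      (B : ℚ⟦X⟧) * (((q₁ : ℚ⟦X⟧) + 1) * ((r₁ : ℚ⟦X⟧) + 1) + ((k₁ : ℚ⟦X⟧) + 1)) *
          (X ^ B * W ^ (r₁ + 1)) +
        ((r₁ : ℚ⟦X⟧) + 1) * (B : ℚ⟦X⟧) * (X ^ B * W ^ r₁ * (X * d⁄dX ℚ W)) := by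
    linear_combination (((r₁ : ℚ⟦X⟧) + 1) * X) * hA1 + X * hA2 + ((B : ℚ⟦X⟧) * X) * hA3 +
      ((B : ℚ⟦X⟧) * X ^ (B + 1)) * hA4 + ((B : ℚ⟦X⟧) * W ^ (r₁ + 1)) * hA5 +
      ((q₁ : ℚ⟦X⟧) + 1) * hR2 + ((B : ℚ⟦X⟧) * X ^ B * W ^ (r₁ + 1)) * hA6
  -- the series S and the exponent N₁
  set Ck : ℚ⟦X⟧ := C (((k₁ + 1 : ℕ) : ℚ) / ((r₁ + 1 : ℕ) : ℚ)) with hCkdef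
  set S : ℚ⟦X⟧ := 1 - Ck * W ^ r₁ * X ^ B with hSdef
  set N₁ : ℕ := (q₁ + 1) * (r₁ + 1) + k₁ with hN₁def
  have hdCk : d⁄dX ℚ Ck = 0 := by rw [hCkdef]; exact derivative_C
  have hdWk : d⁄dX ℚ (W ^ (k₁ + 1)) = ((k₁ : ℚ⟦X⟧) + 1) * W ^ k₁ * d⁄dX ℚ W := aux_dpow W k₁
  have hdSN : d⁄dX ℚ (S ^ (N₁ + 1)) = ((N₁ : ℚ⟦X⟧) + 1) * S ^ N₁ * d⁄dX ℚ S := aux_dpow S N₁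
  have hWS : W * d⁄dX ℚ (W ^ r₁) = (r₁ : ℚ⟦X⟧) * W ^ r₁ * d⁄dX ℚ W := aux_mul_dpow W r₁
  have hdS : d⁄dX ℚ S = -(Ck * (d⁄dX ℚ (W ^ r₁) * X ^ B + W ^ r₁ * d⁄dX ℚ (X ^ B))) := by
    rw [hSdef, map_sub, Derivation.map_one_eq_zero, zero_sub]
    congr 1
    rw [Derivation.leibniz, Derivation.leibniz, hdCk, smul_zero, add_zero]
    simp only [smul_eq_mul]
    ring
  have hdG : d⁄dX ℚ (W ^ (k₁ + 1) * S ^ (N₁ + 1)) =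
      W ^ (k₁ + 1) * d⁄dX ℚ (S ^ (N₁ + 1)) + S ^ (N₁ + 1) * d⁄dX ℚ (W ^ (k₁ + 1)) := by
    rw [Derivation.leibniz, smul_eq_mul, smul_eq_mul]
  have h8 : ((r₁ : ℚ⟦X⟧) + 1) * Ck = ((k₁ : ℚ⟦X⟧) + 1) := by
    rw [hCkdef, hcast' r₁, hcast' k₁, ← map_mul]
    congr 1
    push_cast
    field_simp
  have h9 : ((r₁ : ℚ⟦X⟧) + 1) * (B : ℚ⟦X⟧) =
      ((k₁ : ℚ⟦X⟧) + 1) + ((N₁ : ℚ⟦X⟧) + 1) * (r₁ : ℚ⟦X⟧) := by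
    have h : (r₁ + 1) * B = (k₁ + 1) + (N₁ + 1) * r₁ := by rw [hN₁def, hB']; ring
    have h2 := congrArg (fun m : ℕ => (m : ℚ⟦X⟧)) h
    push_cast at h2
    exact h2
  have h10 : ((N₁ : ℚ⟦X⟧) + 1) =
      ((q₁ : ℚ⟦X⟧) + 1) * ((r₁ : ℚ⟦X⟧) + 1) + ((k₁ : ℚ⟦X⟧) + 1) := by
    have h : N₁ + 1 = (q₁ + 1) * (r₁ + 1) + (k₁ + 1) := by rw [hN₁def]; ring
    have h2 := congrArg (fun m : ℕ => (m : ℚ⟦X⟧)) h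
    push_cast at h2
    exact h2
  have hzero : ((r₁ : ℚ⟦X⟧) + 1) *
      (W * (S * (X * d⁄dX ℚ (W ^ (k₁ + 1) * S ^ (N₁ + 1))))) = 0 := by
    rw [hdG, hdSN, hdWk, hdS]
    linear_combination
      (-(((r₁ : ℚ⟦X⟧) + 1) * ((N₁ : ℚ⟦X⟧) + 1) * Ck * W ^ (k₁ + 1) * S ^ (N₁ + 1) * X ^ B * X)) *
          hWS +
        (-(((r₁ : ℚ⟦X⟧) + 1) * ((N₁ : ℚ⟦X⟧) + 1) * Ck * W ^ (k₁ + 1) * W * S ^ (N₁ + 1) *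
            W ^ r₁)) * hA5 +
        (-(((N₁ : ℚ⟦X⟧) + 1) * (r₁ : ℚ⟦X⟧) * W ^ (k₁ + 1) * W ^ r₁ * S ^ (N₁ + 1) * X ^ B * X *
              d⁄dX ℚ W) -
            ((N₁ : ℚ⟦X⟧) + 1) * (B : ℚ⟦X⟧) * W ^ (k₁ + 1) * W * W ^ r₁ * S ^ (N₁ + 1) * X ^ B -
            ((k₁ : ℚ⟦X⟧) + 1) * W ^ (k₁ + 1) * S ^ (N₁ + 1) * W ^ r₁ * X ^ B * X * d⁄dX ℚ W) *
          h8 +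
        (((r₁ : ℚ⟦X⟧) + 1) * ((k₁ : ℚ⟦X⟧) + 1) * W ^ (k₁ + 1) * S ^ (N₁ + 1) * X * d⁄dX ℚ W) *
          hSdef +
        (((k₁ : ℚ⟦X⟧) + 1) * W ^ (k₁ + 1) * S ^ (N₁ + 1)) * hKEY +
        (-(((k₁ : ℚ⟦X⟧) + 1) * (B : ℚ⟦X⟧) * W ^ (k₁ + 1) * W * S ^ (N₁ + 1) * X ^ B * W ^ r₁)) *
          h10 +
        (((k₁ : ℚ⟦X⟧) + 1) * W ^ (k₁ + 1) * S ^ (N₁ + 1) * X ^ B * W ^ r₁ * X * d⁄dX ℚ W) * h9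
  -- constant coefficients
  have hccW : constantCoeff W = 1 := by
    have h := hWc 0
    rw [mul_zero, coeff_zero_eq_constantCoeff] at h
    rw [h]
    simp only [heW, mul_zero, Nat.zero_add, Nat.factorial_zero, ha0]
    push_cast
    field_simp
  have hccS : constantCoeff S = 1 := by
    rw [hSdef]
    simp [constantCoeff_X, zero_pow hBpos.ne']
  have hWne : W ≠ 0 := fun h => by rw [h, map_zero] at hccW; exact zero_ne_one hccW
  have hSne : S ≠ 0 := fun h => by rw [h, map_zero] at hccS; exact zero_ne_one hccS
  have hrrne : ((r₁ : ℚ⟦X⟧) + 1) ≠ 0 := by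
    intro h
    have h2 := congrArg (constantCoeff) h
    simp at h2
    exact absurd h2 (by positivity)
  have hdGzero : d⁄dX ℚ (W ^ (k₁ + 1) * S ^ (N₁ + 1)) = 0 := by
    rcases mul_eq_zero.1 hzero with h | h
    · exact absurd h hrrne
    rcases mul_eq_zero.1 h with h | h
    · exact absurd h hWne
    rcases mul_eq_zero.1 h with h | h
    · exact absurd h hSne
    rcases mul_eq_zero.1 h with h | h
    · exact absurd h X_ne_zero
    exact h
  have hG1 : W ^ (k₁ + 1) * S ^ (N₁ + 1) = 1 := by
    rw [aux_const _ hdGzero, map_mul, map_pow, map_pow, hccW, hccS, one_pow, one_pow,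
      mul_one, map_one]
  -- roots
  have hgne : g ≠ 0 := by
    have : 0 < Nat.gcd ((q₁ + 1) * (r₁ + 1)) (k₁ + 1) :=
      Nat.gcd_pos_of_pos_right _ (by omega)
    omega
  have hκg : κ * g = k₁ + 1 := by
    rw [hκ, hg]
    exact Nat.div_mul_cancel (Nat.gcd_dvd_right _ _)
  have hρκg : (ρ + κ) * g = N₁ + 1 := by
    rw [add_mul, hρ, hκ, hg, Nat.div_mul_cancel (Nat.gcd_dvd_left _ _),
      Nat.div_mul_cancel (Nat.gcd_dvd_right _ _), hN₁def]
    ring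
  have hU : W ^ κ * S ^ (ρ + κ) = 1 := by
    apply aux_root _ g hgne
    · rw [mul_pow, ← pow_mul, ← pow_mul, hκg, hρκg]
      exact hG1
    · rw [map_mul, map_pow, map_pow, hccW, hccS, one_pow, one_pow, mul_one]
  -- final assembly
  rw [hYW]
  simp only [Nat.add_sub_cancel]
  have hBexp : q₁ * r₁ + (r₁ + (k₁ + 1)) = B := by rw [hB']; ring
  have hexp : ((X : ℚ⟦X⟧) ^ q₁ * W) ^ r₁ * (X : ℚ⟦X⟧) ^ (r₁ + (k₁ + 1)) =
      W ^ r₁ * X ^ B := by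
    rw [mul_pow, ← pow_mul, mul_comm ((X : ℚ⟦X⟧) ^ (q₁ * r₁)) (W ^ r₁), mul_assoc,
      ← pow_add, hBexp]
  rw [mul_assoc Ck, hexp, ← mul_assoc Ck, ← hSdef, mul_pow, ← pow_mul, mul_assoc, hU, mul_one]
end

section
/- Let q, r, k be positive integers, set B = q(r-1)+k, and let a : ℕ → ℚ and Y ∈ ℚ⟦X⟧ be as in the context. Then Y satisfies the first-order differential equation (1 - B·Y^{r-1}·X^{r-1+k}) · X · Y' = ((q-1) + (B·(r+k)/r)·Y^{r-1}·X^{r-1+k}) · Y in ℚ⟦X⟧, where Y' denotes the formal derivative of Y. (Equivalently, (1 - (q(r-1)+k)·Y^{r-1}X^{r-1+k})·dY/Y = ((q-1) + (q(r-1)+k)(r+k)/r · Y^{r-1}X^{r-1+k})·dX/X.) -/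
open PowerSeries Finset Nat

lemma coeff_pow_tuple (f : PowerSeries ℚ) (r n : ℕ) :
    PowerSeries.coeff (R := ℚ) n (f ^ r) =
      ∑ t ∈ Finset.Nat.antidiagonalTuple r n, ∏ j, PowerSeries.coeff (R := ℚ) (t j) f := by
  rw [PowerSeries.coeff_pow]
  refine Finset.sum_nbij' (i := fun l => fun j : Fin r => l j.val)
    (j := fun t => Finsupp.onFinset (Finset.range r)
      (fun i => if h : i < r then t ⟨i, h⟩ else 0)
      (by intro i hi; rw [Finset.mem_range]; by_contra hc; simp [hc] at hi))
    ?_ ?_ ?_ ?_ ?_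
  · intro l hl
    rw [Finset.mem_finsuppAntidiag] at hl
    rw [Finset.Nat.mem_antidiagonalTuple, ← hl.1]
    rw [Fin.sum_univ_eq_sum_range (fun i => l i) r]
  · intro t ht
    rw [Finset.Nat.mem_antidiagonalTuple] at ht
    rw [Finset.mem_finsuppAntidiag]
    constructor
    · simp only [Finsupp.coe_onFinset]
      rw [← ht, ← Fin.sum_univ_eq_sum_range (fun i => if h : i < r then t ⟨i, h⟩ else 0) r]
      apply Finset.sum_congr rfl
      intro j _
      simp [j.isLt]
    · exact Finsupp.support_onFinset_subset
  · intro l hl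
    rw [Finset.mem_finsuppAntidiag] at hl
    ext i
    simp only [Finsupp.onFinset_apply]
    split_ifs with h
    · rfl
    · symm
      by_contra hc
      have : i ∈ l.support := Finsupp.mem_support_iff.mpr hc
      have := hl.2 this
      rw [Finset.mem_range] at this
      exact h this
  · intro t ht
    funext j
    simp [j.isLt]
  · intro l hl
    rw [Fin.prod_univ_eq_prod_range (fun i => PowerSeries.coeff (R := ℚ) (l i) f) r]

lemma coeff_X_mul_derivative (f : PowerSeries ℚ) (n : ℕ) :
    PowerSeries.coeff (R := ℚ) n (PowerSeries.X * PowerSeries.derivative ℚ f) =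
      (n : ℚ) * PowerSeries.coeff (R := ℚ) n f := by
  cases n with
  | zero => simp
  | succ n =>
    rw [PowerSeries.coeff_succ_X_mul, PowerSeries.coeff_derivative]
    push_cast
    ring

/-- Let `q, r, k` be positive integers, `B = q(r-1)+k`, let
`a : ℕ → ℚ` be the genus-0 one-part `(k,r,q)`-leaky completed-cycles Hurwitz
numbers (determined by `a 0 = 1/q` and the tropical cut-and-join recursion),
and let `Y = Σ_{b≥0} ((B·b+q)·a(b)/b!) · X^{B·b+q-1} ∈ ℚ⟦X⟧`.  Then `Y`
satisfies the first-order differential equation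
`(1 - B·Y^{r-1}·X^{r-1+k}) · X · Y' = ((q-1) + (B·(r+k)/r)·Y^{r-1}·X^{r-1+k}) · Y`
in `ℚ⟦X⟧`, where `Y'` is the formal derivative of `Y`. -/
theorem leaky_one_part_ODE
    (q r k : ℕ) (hq : 0 < q) (hr : 0 < r) (hk : 0 < k)
    (B : ℕ) (hB : B = q * (r - 1) + k)
    (a : ℕ → ℚ)
    (ha0 : a 0 = 1 / q)
    (harec : ∀ b : ℕ, 1 ≤ b → a b = (1 / r : ℚ) *
      ∑ t ∈ Finset.Nat.antidiagonalTuple r (b - 1),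
        (((b - 1)! : ℚ) / ∏ j, ((t j)! : ℚ)) *
          ∏ j, (((B * t j + q : ℕ) : ℚ) * a (t j)))
    (Y : PowerSeries ℚ)
    (hYcoeff : ∀ b : ℕ,
      PowerSeries.coeff (R := ℚ) (B * b + q - 1) Y = ((B * b + q : ℕ) : ℚ) * a b / (b)!)
    (hYzero : ∀ n : ℕ, (∀ b : ℕ, n ≠ B * b + q - 1) → PowerSeries.coeff (R := ℚ) n Y = 0) :
    (1 - PowerSeries.C (R := ℚ) (B : ℚ) * Y ^ (r - 1) * PowerSeries.X ^ (r - 1 + k)) *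
        PowerSeries.X * PowerSeries.derivative ℚ Y =
      (PowerSeries.C (R := ℚ) ((q : ℚ) - 1) +
          PowerSeries.C (R := ℚ) ((B : ℚ) * (r + k) / r) * Y ^ (r - 1) *
            PowerSeries.X ^ (r - 1 + k)) * Y := by
  classical
  have hrQ : (r : ℚ) ≠ 0 := Nat.cast_ne_zero.mpr hr.ne'
  obtain ⟨q', rfl⟩ : ∃ q', q = q' + 1 := ⟨q - 1, by omega⟩
  obtain ⟨r', rfl⟩ : ∃ r', r = r' + 1 := ⟨r - 1, by omega⟩
  have hB' : B = (q' + 1) * r' + k := by rw [hB]; rfl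
  have hBpos : 0 < B := by
    rw [hB']
    calc 0 < k := hk
    _ ≤ (q' + 1) * r' + k := Nat.le_add_left k _
  -- support lemma for powers of Y
  have hpow0 : ∀ m : ℕ, (∀ s : ℕ, m ≠ B * s + (r' + 1) * q') →
      PowerSeries.coeff (R := ℚ) m (Y ^ (r' + 1)) = 0 := by
    intro m hm
    rw [coeff_pow_tuple]
    apply Finset.sum_eq_zero
    intro t ht
    by_contra hne
    have hall : ∀ j : Fin (r' + 1), ∃ bj : ℕ, t j = B * bj + q' := by
      intro j
      by_contra hc
      push_neg at hc
      exact hne (Finset.prod_eq_zero (Finset.mem_univ j) (hYzero _ (fun bb => hc bb)))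
    choose f hf using hall
    rw [Finset.Nat.mem_antidiagonalTuple] at ht
    apply hm (∑ j, f j)
    rw [← ht]
    calc ∑ j, t j = ∑ j : Fin (r' + 1), (B * f j + q') :=
          Finset.sum_congr rfl fun j _ => hf j
    _ = B * (∑ j, f j) + (r' + 1) * q' := by
        rw [Finset.sum_add_distrib, ← Finset.mul_sum, Finset.sum_const, Finset.card_univ,
          Fintype.card_fin, smul_eq_mul]
  -- the helper describing nonzero products
  have hform : ∀ (t : Fin (r' + 1) → ℕ), (∏ j, PowerSeries.coeff (R := ℚ) (t j) Y) ≠ 0 →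
      ∀ j, ∃ bj, t j = B * bj + q' := by
    intro t hne j
    by_contra hc
    push_neg at hc
    exact hne (Finset.prod_eq_zero (Finset.mem_univ j) (hYzero _ (fun bb => hc bb)))
  have hinv : ∀ bj : ℕ, (B * bj + q' + 1 - (q' + 1)) / B = bj := by
    intro bj
    have h1 : B * bj + q' + 1 - (q' + 1) = B * bj := by omega
    rw [h1, Nat.mul_div_cancel_left bj hBpos]
  -- sums of values of the special form
  have hsumform : ∀ (u : Fin (r' + 1) → ℕ),
      ∑ j, (B * u j + q') = B * (∑ j, u j) + (r' + 1) * q' := by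
    intro u
    rw [Finset.sum_add_distrib, ← Finset.mul_sum, Finset.sum_const, Finset.card_univ,
      Fintype.card_fin, smul_eq_mul]
  -- value lemma for powers of Y
  have hpow1 : ∀ b' : ℕ, PowerSeries.coeff (R := ℚ) (B * b' + (r' + 1) * q') (Y ^ (r' + 1)) =
      (r' + 1 : ℚ) * a (b' + 1) / (b')! := by
    intro b'
    rw [coeff_pow_tuple]
    have hbij : ∑ t ∈ Finset.Nat.antidiagonalTuple (r' + 1) (B * b' + (r' + 1) * q'),
          ∏ j, PowerSeries.coeff (R := ℚ) (t j) Y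
        = ∑ u ∈ Finset.Nat.antidiagonalTuple (r' + 1) b',
          ∏ j, (((B * u j + (q' + 1) : ℕ) : ℚ) * a (u j) / ((u j))!) := by
      apply Finset.sum_bij_ne_zero
        (i := fun t _ _ => fun j : Fin (r' + 1) => (t j + 1 - (q' + 1)) / B)
      · intro t h₁ h₂
        rw [Finset.Nat.mem_antidiagonalTuple] at h₁ ⊢
        obtain ⟨f, hf⟩ := (by choose f hf using hform t h₂; exact ⟨f, hf⟩ :
          ∃ f : Fin (r' + 1) → ℕ, ∀ j, t j = B * f j + q')
        have hsum : ∑ j, t j = B * (∑ j, f j) + (r' + 1) * q' := by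
          rw [Finset.sum_congr rfl fun j _ => hf j, hsumform]
        have hfsum : ∑ j, f j = b' := by
          rw [h₁] at hsum
          have := Nat.add_right_cancel hsum.symm
          exact Nat.eq_of_mul_eq_mul_left hBpos this
        calc ∑ j, (t j + 1 - (q' + 1)) / B = ∑ j, f j := by
              apply Finset.sum_congr rfl
              intro j _
              rw [hf j, hinv]
        _ = b' := hfsum
      · intro t₁ h₁₁ h₁₂ t₂ h₂₁ h₂₂ heq
        funext j
        obtain ⟨b1, hb1⟩ := hform t₁ h₁₂ j
        obtain ⟨b2, hb2⟩ := hform t₂ h₂₂ j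
        have := congrFun heq j
        simp only [hb1, hb2, hinv] at this
        rw [hb1, hb2, this]
      · intro u hu hgu
        refine ⟨fun j => B * u j + q', ?_, ?_, ?_⟩
        · rw [Finset.Nat.mem_antidiagonalTuple] at hu ⊢
          rw [hsumform, hu]
        · have : (∏ j, PowerSeries.coeff (R := ℚ) (B * u j + q') Y)
              = ∏ j, (((B * u j + (q' + 1) : ℕ) : ℚ) * a (u j) / ((u j))!) := by
            apply Finset.prod_congr rfl
            intro j _
            exact hYcoeff (u j)
          rw [this]
          exact hgu
        · funext j
          exact hinv (u j)
      · intro t h₁ h₂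
        apply Finset.prod_congr rfl
        intro j _
        obtain ⟨bj, hbj⟩ := hform t h₂ j
        simp only [hbj, hinv]
        exact hYcoeff bj
    rw [hbij]
    have hb'f : ((b' : ℕ)! : ℚ) ≠ 0 := Nat.cast_ne_zero.mpr (Nat.factorial_ne_zero _)
    have hrec := harec (b' + 1) (Nat.le_add_left 1 b')
    simp only [Nat.add_sub_cancel] at hrec
    have hS : ∑ t ∈ Finset.Nat.antidiagonalTuple (r' + 1) b',
        (((b')! : ℚ) / ∏ j, ((t j)! : ℚ)) *
          ∏ j, (((B * t j + (q' + 1) : ℕ) : ℚ) * a (t j))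
        = ((r' : ℚ) + 1) * a (b' + 1) := by
      have : ((r' : ℚ) + 1) ≠ 0 := by positivity
      rw [hrec]
      push_cast
      field_simp
    rw [← hS, Finset.sum_div]
    apply Finset.sum_congr rfl
    intro u hu
    have hy : (∏ j, ((u j)! : ℚ)) ≠ 0 := by
      apply Finset.prod_ne_zero_iff.mpr
      intro j _
      exact Nat.cast_ne_zero.mpr (Nat.factorial_ne_zero _)
    rw [Finset.prod_div_distrib]
    field_simp
  -- reduction to the symmetric form of the ODE
  suffices hmain : PowerSeries.X * PowerSeries.derivative ℚ Y -
      PowerSeries.C (R := ℚ) (((q' + 1 : ℕ) : ℚ) - 1) * Y =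
      PowerSeries.C (R := ℚ) ((B : ℚ) / ((r' + 1 : ℕ) : ℚ)) * PowerSeries.X ^ ((r' + 1) - 1 + k) *
        (PowerSeries.X * PowerSeries.derivative ℚ (Y ^ (r' + 1)) +
          PowerSeries.C (R := ℚ) (((r' + 1 : ℕ) : ℚ) + k) * Y ^ (r' + 1)) by
    have hd : PowerSeries.derivative ℚ (Y ^ (r' + 1)) =
        PowerSeries.C (R := ℚ) ((r' + 1 : ℕ) : ℚ) *
          (Y ^ ((r' + 1) - 1) * PowerSeries.derivative ℚ Y) := by
      rw [Derivation.leibniz_pow]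
      simp only [smul_eq_mul, nsmul_eq_mul, map_natCast]
    have hYr : Y ^ (r' + 1) = Y ^ ((r' + 1) - 1) * Y := by
      rw [pow_succ]; rfl
    have hc1 : PowerSeries.C (R := ℚ) ((B : ℚ)) =
        PowerSeries.C (R := ℚ) ((B : ℚ) / ((r' + 1 : ℕ) : ℚ)) *
          PowerSeries.C (R := ℚ) ((r' + 1 : ℕ) : ℚ) := by
      rw [← map_mul]; congr 1; field_simp
    have hc2 : PowerSeries.C (R := ℚ) ((B : ℚ) * (((r' + 1 : ℕ) : ℚ) + k) / ((r' + 1 : ℕ) : ℚ)) =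
        PowerSeries.C (R := ℚ) ((B : ℚ) / ((r' + 1 : ℕ) : ℚ)) *
          PowerSeries.C (R := ℚ) (((r' + 1 : ℕ) : ℚ) + k) := by
      rw [← map_mul]; congr 1; field_simp
    rw [hd, hYr] at hmain
    rw [hc1, hc2]
    linear_combination hmain
  -- now prove the symmetric equation coefficientwise
  ext n
  rw [map_sub, PowerSeries.coeff_C_mul, coeff_X_mul_derivative, mul_assoc,
    PowerSeries.coeff_C_mul, PowerSeries.coeff_X_pow_mul']
  by_cases hn : ∃ bb : ℕ, n = B * bb + q'
  · obtain ⟨bb, rfl⟩ := hn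
    cases bb with
    | zero =>
      by_cases h : (r' + 1) - 1 + k ≤ B * 0 + q'
      · rw [if_pos h, map_add, coeff_X_mul_derivative, PowerSeries.coeff_C_mul]
        have hz : PowerSeries.coeff (R := ℚ) (B * 0 + q' - ((r' + 1) - 1 + k)) (Y ^ (r' + 1)) = 0 := by
          apply hpow0
          intro s heq
          have h1 : q' ≤ B * s + (r' + 1) * q' :=
            le_trans (Nat.le_mul_of_pos_left q' (Nat.succ_pos r')) (Nat.le_add_left _ _)
          omega
        rw [hz]
        push_cast
        ring
      · rw [if_neg h]
        push_cast
        ring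
    | succ b' =>
      have hle : (r' + 1) - 1 + k ≤ B * (b' + 1) + q' := by
        have h0 : r' + k ≤ B := by
          rw [hB']
          have : r' ≤ (q' + 1) * r' := Nat.le_mul_of_pos_left r' (Nat.succ_pos q')
          omega
        have h1 : B ≤ B * (b' + 1) := Nat.le_mul_of_pos_right B (Nat.succ_pos b')
        omega
      have hsub : B * (b' + 1) + q' - ((r' + 1) - 1 + k) = B * b' + (r' + 1) * q' := by
        have heq2 : B * (b' + 1) + q' = (B * b' + (r' + 1) * q') + ((r' + 1) - 1 + k) := by
          simp only [Nat.add_sub_cancel]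
          rw [hB']
          ring
        rw [heq2, Nat.add_sub_cancel]
      rw [if_pos hle, hsub, map_add, coeff_X_mul_derivative, PowerSeries.coeff_C_mul]
      have hcY : PowerSeries.coeff (R := ℚ) (B * (b' + 1) + q') Y =
          ((B * (b' + 1) + (q' + 1) : ℕ) : ℚ) * a (b' + 1) / (b' + 1)! :=
        hYcoeff (b' + 1)
      rw [hcY, hpow1 b']
      have hBQ : (B : ℚ) = (q' + 1) * r' + k := by rw [hB']; push_cast; ring
      have hfact : (((b' + 1) : ℕ)! : ℚ) = ((b' : ℚ) + 1) * ((b')! : ℚ) := by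
        rw [Nat.factorial_succ]; push_cast; ring
      have hb'f : ((b' : ℕ)! : ℚ) ≠ 0 := Nat.cast_ne_zero.mpr (Nat.factorial_ne_zero _)
      have hb1 : ((b' : ℚ) + 1) ≠ 0 := by positivity
      have hr1 : ((r' : ℚ) + 1) ≠ 0 := by positivity
      push_cast [hfact]
      rw [hBQ]
      field_simp
      ring
  · push_neg at hn
    have hY0 : PowerSeries.coeff (R := ℚ) n Y = 0 := hYzero n (fun bb => hn bb)
    rw [hY0]
    by_cases h : (r' + 1) - 1 + k ≤ n
    · rw [if_pos h, map_add, coeff_X_mul_derivative, PowerSeries.coeff_C_mul]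
      have hz : PowerSeries.coeff (R := ℚ) (n - ((r' + 1) - 1 + k)) (Y ^ (r' + 1)) = 0 := by
        apply hpow0
        intro s heq
        apply hn (s + 1)
        calc n = n - ((r' + 1) - 1 + k) + ((r' + 1) - 1 + k) := (Nat.sub_add_cancel h).symm
        _ = B * s + (r' + 1) * q' + ((r' + 1) - 1 + k) := by rw [heq]
        _ = B * (s + 1) + q' := by
            simp only [Nat.add_sub_cancel]
            rw [hB']
            ring
      rw [hz]
      ring
    · rw [if_neg h]
      ring
end

section
/- Let q, r, k be positive integers, and set g = gcd(q·r, k), ρ = q·r/g, κ = k/g. There exists exactly one power series Y ∈ ℚ⟦X⟧ whose coefficients vanish in all degrees strictly below q-1, whose coefficient in degree q-1 equals 1, and which satisfies X^{(q-1)·κ} = Y^κ · (1 - (k/r)·Y^{r-1}·X^{r-1+k})^{ρ+κ} in ℚ⟦X⟧. -/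
open PowerSeries

namespace LeakyAux

/-- The map `Z ↦ Z^κ (1 - c X^m Z^s)^T`. -/
noncomputable def G (c : ℚ) (m s T κ : ℕ) (Z : ℚ⟦X⟧) : ℚ⟦X⟧ :=
  Z ^ κ * (1 - C c * X ^ m * Z ^ s) ^ T

lemma dvd_G_sub (c : ℚ) (m s T κ N : ℕ) {Z Z' : ℚ⟦X⟧}
    (h : (X : ℚ⟦X⟧) ^ N ∣ Z - Z') :
    (X : ℚ⟦X⟧) ^ N ∣ G c m s T κ Z - G c m s T κ Z' := by
  have h1 : (X : ℚ⟦X⟧) ^ N ∣ Z ^ κ - Z' ^ κ := h.trans (sub_dvd_pow_sub_pow Z Z' κ)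
  have h2 : (X : ℚ⟦X⟧) ^ N ∣
      (1 - C c * X ^ m * Z ^ s) ^ T - (1 - C c * X ^ m * Z' ^ s) ^ T := by
    refine dvd_trans ?_ (sub_dvd_pow_sub_pow _ _ T)
    have hdiff : (1 - C c * X ^ m * Z ^ s) - (1 - C c * X ^ m * Z' ^ s)
        = -(C c * X ^ m) * (Z ^ s - Z' ^ s) := by ring
    rw [hdiff]
    exact (h.trans (sub_dvd_pow_sub_pow Z Z' s)).mul_left _
  have key : G c m s T κ Z - G c m s T κ Z'
      = (Z ^ κ - Z' ^ κ) * (1 - C c * X ^ m * Z ^ s) ^ T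
        + Z' ^ κ * ((1 - C c * X ^ m * Z ^ s) ^ T
            - (1 - C c * X ^ m * Z' ^ s) ^ T) := by
    unfold G; ring
  rw [key]
  exact dvd_add (h1.mul_right _) (h2.mul_left _)

lemma add_pow_aux (n : ℕ) (Z w : ℚ⟦X⟧) :
    ∃ R, (Z + w) ^ (n + 1) = Z ^ (n + 1) + (n + 1 : ℕ) * (w * Z ^ n) + w ^ 2 * R := by
  induction n with
  | zero => exact ⟨0, by push_cast; ring⟩
  | succ n ih =>
    obtain ⟨R, hR⟩ := ih
    refine ⟨(n + 1 : ℕ) * Z ^ n + R * (Z + w), ?_⟩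
    rw [pow_succ, hR]
    push_cast
    ring

lemma constCoeff_X_pow_eq_zero {m : ℕ} (hm : 1 ≤ m) :
    constantCoeff ((X : ℚ⟦X⟧) ^ m) = 0 := by
  rw [map_pow, constantCoeff_X, zero_pow (Nat.one_le_iff_ne_zero.mp hm)]

lemma constCoeff_factor (c : ℚ) {m : ℕ} (s T : ℕ) (hm : 1 ≤ m) (Z : ℚ⟦X⟧) :
    constantCoeff ((1 - C c * X ^ m * Z ^ s) ^ T) = 1 := by
  rw [map_pow, map_sub, map_one, map_mul, map_mul, constCoeff_X_pow_eq_zero hm]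
  simp

lemma coeff_G_perturb (c : ℚ) (m s T κ : ℕ) (hm : 1 ≤ m) (hκ : 1 ≤ κ)
    {Z : ℚ⟦X⟧} (hZ : constantCoeff Z = 1) (N : ℕ) (hN : 1 ≤ N) (t : ℚ) :
    coeff N (G c m s T κ (Z + C t * X ^ N))
      = coeff N (G c m s T κ Z) + κ * t := by
  obtain ⟨n, rfl⟩ : ∃ n, κ = n + 1 := ⟨κ - 1, (Nat.succ_pred_eq_of_pos hκ).symm⟩
  set w : ℚ⟦X⟧ := C t * X ^ N with hw
  set Z' : ℚ⟦X⟧ := Z + w with hZ'def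
  set U' : ℚ⟦X⟧ := (1 - C c * X ^ m * Z' ^ s) ^ T with hU'
  set U : ℚ⟦X⟧ := (1 - C c * X ^ m * Z ^ s) ^ T with hU
  obtain ⟨R, hR⟩ := add_pow_aux n Z w
  have key : G c m s T (n + 1) Z' = G c m s T (n + 1) Z
      + (n + 1 : ℕ) * (w * (Z ^ n * U')) + w ^ 2 * (R * U') + Z ^ (n + 1) * (U' - U) := by
    show Z' ^ (n + 1) * U' = Z ^ (n + 1) * U + _ + _ + _
    rw [hZ'def, hR]
    ring
  have hcZ' : constantCoeff Z' = 1 := by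
    rw [hZ'def, map_add, hZ, hw, map_mul, constCoeff_X_pow_eq_zero hN, mul_zero, add_zero]
  have c1 : coeff N (((n + 1 : ℕ) : ℚ⟦X⟧) * (w * (Z ^ n * U'))) = (n + 1) * t := by
    have e : ((n + 1 : ℕ) : ℚ⟦X⟧) * (w * (Z ^ n * U'))
        = C (((n : ℚ) + 1) * t) * (X ^ N * (Z ^ n * U')) := by
      rw [hw, map_mul, map_add, map_one, map_natCast]
      push_cast
      ring
    rw [e, coeff_C_mul]
    have e2 : coeff N ((X : ℚ⟦X⟧) ^ N * (Z ^ n * U')) = coeff 0 (Z ^ n * U') := by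
      simpa using coeff_X_pow_mul (Z ^ n * U') N 0
    rw [e2, coeff_zero_eq_constantCoeff, map_mul, map_pow, hZ,
      hU', constCoeff_factor c s T hm Z', one_pow, one_mul, mul_one]
  have c2 : coeff N (w ^ 2 * (R * U')) = 0 := by
    have hdvd : (X : ℚ⟦X⟧) ^ (2 * N) ∣ w ^ 2 * (R * U') := by
      refine Dvd.dvd.mul_right ⟨C t ^ 2, ?_⟩ _
      rw [hw]; ring
    exact X_pow_dvd_iff.mp hdvd N (by omega)
  have c3 : coeff N (Z ^ (n + 1) * (U' - U)) = 0 := by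
    have hdvd : (X : ℚ⟦X⟧) ^ (m + N) ∣ U' - U := by
      refine dvd_trans ?_ (sub_dvd_pow_sub_pow _ _ T)
      have hdiff : (1 - C c * X ^ m * Z' ^ s) - (1 - C c * X ^ m * Z ^ s)
          = -(C c) * X ^ m * (Z' ^ s - Z ^ s) := by ring
      rw [hdiff, pow_add]
      have h1 : (X : ℚ⟦X⟧) ^ m ∣ -(C c) * X ^ m := Dvd.intro_left _ rfl
      have h2 : (X : ℚ⟦X⟧) ^ N ∣ Z' ^ s - Z ^ s := by
        refine dvd_trans ?_ (sub_dvd_pow_sub_pow Z' Z s)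
        have : Z' - Z = X ^ N * C t := by rw [hZ'def, hw]; ring
        exact ⟨C t, this⟩
      exact mul_dvd_mul h1 h2
    exact (X_pow_dvd_iff.mp (hdvd.mul_left _) N (by omega))
  rw [key, map_add, map_add, map_add, c1, c2, c3]
  push_cast
  ring

lemma coeff_G_perturb' (c : ℚ) (m s T κ : ℕ) (hm : 1 ≤ m) (hκ : 1 ≤ κ)
    {Z D : ℚ⟦X⟧} (hZ : constantCoeff Z = 1)
    (N : ℕ) (hN : 1 ≤ N) (hD : (X : ℚ⟦X⟧) ^ N ∣ D) :
    coeff N (G c m s T κ (Z + D))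
      = coeff N (G c m s T κ Z) + κ * coeff N D := by
  set t : ℚ := coeff N D with ht
  have hdvd : (X : ℚ⟦X⟧) ^ (N + 1) ∣ (Z + D) - (Z + C t * X ^ N) := by
    rw [X_pow_dvd_iff]
    intro i hi
    have e : (Z + D) - (Z + C t * X ^ N) = D - C t * X ^ N := by ring
    rw [e, map_sub, coeff_C_mul, coeff_X_pow]
    rcases Nat.lt_or_ge i N with h | h
    · rw [X_pow_dvd_iff.mp hD i h, if_neg (by omega)]
      ring
    · have : i = N := by omega
      subst this
      rw [if_pos rfl, mul_one, ht, sub_self]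
  have := dvd_G_sub c m s T κ (N + 1) hdvd
  have heq : coeff N (G c m s T κ (Z + D))
      = coeff N (G c m s T κ (Z + C t * X ^ N)) := by
    have h0 := X_pow_dvd_iff.mp this N (by omega)
    rw [map_sub] at h0
    linarith
  rw [heq, coeff_G_perturb c m s T κ hm hκ hZ N hN t]

noncomputable def Zseq (c : ℚ) (m s T κ : ℕ) : ℕ → ℚ⟦X⟧
  | 0 => 1
  | n + 1 => Zseq c m s T κ n
      + C (-(coeff (n + 1) (G c m s T κ (Zseq c m s T κ n))) / κ) * X ^ (n + 1)

lemma constantCoeff_Zseq (c : ℚ) (m s T κ : ℕ) (n : ℕ) :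
    constantCoeff (Zseq c m s T κ n) = 1 := by
  induction n with
  | zero => simp [Zseq]
  | succ n ih =>
    rw [Zseq, map_add, ih, map_mul, constCoeff_X_pow_eq_zero (by omega), mul_zero, add_zero]

lemma coeff_Zseq_stable (c : ℚ) (m s T κ : ℕ) :
    ∀ n, ∀ i ≤ n, coeff i (Zseq c m s T κ n) = coeff i (Zseq c m s T κ i) := by
  intro n
  induction n with
  | zero =>
    intro i hi
    have : i = 0 := Nat.le_zero.mp hi
    subst this
    rfl
  | succ n ih =>
    intro i hi
    rcases Nat.lt_or_ge i (n + 1) with h | h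
    · rw [Zseq, map_add, coeff_C_mul, coeff_X_pow, if_neg (by omega), mul_zero, add_zero]
      exact ih i (by omega)
    · have : i = n + 1 := by omega
      subst this; rfl

lemma coeff_G_Zseq (c : ℚ) (m s T κ : ℕ) (hm : 1 ≤ m) (hκ : 1 ≤ κ) :
    ∀ n, ∀ i ≤ n, coeff i (G c m s T κ (Zseq c m s T κ n)) = coeff i 1 := by
  intro n
  induction n with
  | zero =>
    intro i hi
    have : i = 0 := by omega
    subst this
    rw [coeff_zero_eq_constantCoeff]
    show constantCoeff (G c m s T κ (Zseq c m s T κ 0)) = constantCoeff 1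
    rw [G, map_mul, map_pow, constantCoeff_Zseq, one_pow,
      constCoeff_factor c s T hm _, mul_one, map_one]
  | succ n ih =>
    intro i hi
    rcases Nat.lt_or_ge i (n + 1) with h | h
    · have hdvd : (X : ℚ⟦X⟧) ^ (n + 1) ∣
          Zseq c m s T κ (n + 1) - Zseq c m s T κ n := by
        refine ⟨C (-(coeff (n + 1) (G c m s T κ (Zseq c m s T κ n))) / κ), ?_⟩
        rw [Zseq]; ring
      have := X_pow_dvd_iff.mp (dvd_G_sub c m s T κ (n + 1) hdvd) i h
      rw [map_sub] at this
      have e : coeff i (G c m s T κ (Zseq c m s T κ (n + 1)))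
          = coeff i (G c m s T κ (Zseq c m s T κ n)) := by linarith
      rw [e]
      exact ih i (by omega)
    · have : i = n + 1 := by omega
      subst this
      rw [show Zseq c m s T κ (n + 1) = Zseq c m s T κ n
          + C (-(coeff (n + 1) (G c m s T κ (Zseq c m s T κ n))) / κ) * X ^ (n + 1)
          from rfl]
      rw [coeff_G_perturb c m s T κ hm hκ (constantCoeff_Zseq c m s T κ n) (n + 1)
        (by omega) _]
      have hκQ : (κ : ℚ) ≠ 0 := by exact_mod_cast (by omega : κ ≠ 0)
      rw [coeff_one, if_neg (by omega)]
      field_simp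
      ring

lemma core (c : ℚ) (m s T κ : ℕ) (hm : 1 ≤ m) (hκ : 1 ≤ κ) :
    ∃! Z : ℚ⟦X⟧, constantCoeff Z = 1 ∧
      Z ^ κ * (1 - C c * X ^ m * Z ^ s) ^ T = 1 := by
  classical
  set Z : ℚ⟦X⟧ := mk fun n => coeff n (Zseq c m s T κ n) with hZdef
  have hdvd : ∀ n, (X : ℚ⟦X⟧) ^ (n + 1) ∣ Z - Zseq c m s T κ n := by
    intro n
    rw [X_pow_dvd_iff]
    intro i hi
    rw [map_sub, hZdef, coeff_mk, coeff_Zseq_stable c m s T κ n i (by omega), sub_self]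
  have hGZ : G c m s T κ Z = 1 := by
    ext i
    have := X_pow_dvd_iff.mp (dvd_G_sub c m s T κ (i + 1) (hdvd i)) i (by omega)
    rw [map_sub] at this
    have e : coeff i (G c m s T κ Z) = coeff i (G c m s T κ (Zseq c m s T κ i)) := by
      linarith
    rw [e, coeff_G_Zseq c m s T κ hm hκ i i le_rfl]
  have hZ1 : constantCoeff Z = 1 := by
    rw [← coeff_zero_eq_constantCoeff_apply, hZdef, coeff_mk,
      coeff_zero_eq_constantCoeff_apply, constantCoeff_Zseq]
  refine ⟨Z, ⟨hZ1, hGZ⟩, ?_⟩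
  intro W hW
  by_contra hne
  have hex : ∃ N, coeff N (W - Z) ≠ 0 := by
    by_contra hall
    push_neg at hall
    apply hne
    ext n
    have h := hall n
    rw [map_sub, sub_eq_zero] at h
    exact h
  set N := Nat.find hex with hNdef
  have hN : coeff N (W - Z) ≠ 0 := Nat.find_spec hex
  have hlt : ∀ i < N, coeff i (W - Z) = 0 := fun i hi => not_not.mp (Nat.find_min hex hi)
  have hN1 : 1 ≤ N := by
    rcases Nat.eq_zero_or_pos N with h0 | h
    · exfalso
      apply hN
      rw [h0, coeff_zero_eq_constantCoeff_apply, map_sub, hW.1, hZ1, sub_self]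
    · exact h
  have hDdvd : (X : ℚ⟦X⟧) ^ N ∣ W - Z := X_pow_dvd_iff.mpr hlt
  have hpert := coeff_G_perturb' c m s T κ hm hκ hZ1 N hN1 hDdvd
  rw [show Z + (W - Z) = W from by ring] at hpert
  have hGW : G c m s T κ W = 1 := hW.2
  rw [hGW, hGZ] at hpert
  have hmul : (κ : ℚ) * coeff N (W - Z) = 0 := by linarith
  have hκQ : (κ : ℚ) ≠ 0 := by exact_mod_cast (by omega : κ ≠ 0)
  rcases mul_eq_zero.mp hmul with h | h
  · exact hκQ h
  · exact hN h

end LeakyAux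

open LeakyAux in
/-- Let `q, r, k` be positive integers, and set
`g = gcd(q·r, k)`, `ρ = q·r/g`, `κ = k/g`.  There exists exactly one power
series `Y ∈ ℚ⟦X⟧` whose coefficients vanish in all degrees strictly below
`q-1`, whose coefficient in degree `q-1` equals `1`, and which satisfies
`X^{(q-1)·κ} = Y^κ · (1 - (k/r)·Y^{r-1}·X^{r-1+k})^{ρ+κ}` in `ℚ⟦X⟧`. -/
theorem leaky_spectral_curve_existence_uniqueness
    (q r k : ℕ) (hq : 0 < q) (hr : 0 < r) (hk : 0 < k)
    (g ρ κ : ℕ) (hg : g = Nat.gcd (q * r) k) (hρ : ρ = q * r / g) (hκ : κ = k / g) :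
    ∃! Y : PowerSeries ℚ,
      (∀ n : ℕ, n < q - 1 → PowerSeries.coeff n Y = 0) ∧
      PowerSeries.coeff (q - 1) Y = 1 ∧
      (PowerSeries.X : PowerSeries ℚ) ^ ((q - 1) * κ) =
        Y ^ κ *
          (1 - PowerSeries.C ((k : ℚ) / r) * Y ^ (r - 1) *
              PowerSeries.X ^ (r - 1 + k)) ^ (ρ + κ) := by
  classical
  set c : ℚ := (k : ℚ) / r with hc
  set m : ℕ := (q - 1) * (r - 1) + (r - 1 + k) with hmdef
  have hm : 1 ≤ m := le_trans hk (le_trans (Nat.le_add_left _ _) (Nat.le_add_left _ _))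
  have hκ1 : 1 ≤ κ := by
    rw [hκ]
    exact Nat.div_pos (Nat.le_of_dvd hk (hg ▸ Nat.gcd_dvd_right _ _))
      (hg ▸ Nat.gcd_pos_of_pos_right _ hk)
  obtain ⟨Z, ⟨hZ1, hZeq⟩, hZuniq⟩ := core c m (r - 1) (ρ + κ) κ hm hκ1
  have hfac : ∀ W : ℚ⟦X⟧,
      1 - C c * (X ^ (q - 1) * W) ^ (r - 1) * X ^ (r - 1 + k)
        = 1 - C c * X ^ m * W ^ (r - 1) := by
    intro W
    rw [mul_pow, ← pow_mul, hmdef, pow_add]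
    ring
  have hkey : ∀ W : ℚ⟦X⟧,
      (X ^ (q - 1) * W) ^ κ *
        (1 - C c * (X ^ (q - 1) * W) ^ (r - 1) * X ^ (r - 1 + k)) ^ (ρ + κ)
      = X ^ ((q - 1) * κ) * (W ^ κ * (1 - C c * X ^ m * W ^ (r - 1)) ^ (ρ + κ)) := by
    intro W
    rw [hfac W, mul_pow, ← pow_mul]
    ring
  refine ⟨X ^ (q - 1) * Z, ⟨?_, ?_, ?_⟩, ?_⟩
  · intro n hn
    rw [coeff_X_pow_mul', if_neg (by omega)]
  · simpa using coeff_X_pow_mul Z (q - 1) 0 |>.trans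
      (by rw [coeff_zero_eq_constantCoeff_apply, hZ1])
  · rw [hkey Z, hZeq, mul_one]
  · intro Y' ⟨h0, h1, h2⟩
    have hXdvd : (X : ℚ⟦X⟧) ^ (q - 1) ∣ Y' := X_pow_dvd_iff.mpr h0
    obtain ⟨W, hW⟩ := hXdvd
    have hW1 : constantCoeff W = 1 := by
      rw [hW] at h1
      have := coeff_X_pow_mul W (q - 1) 0
      rw [zero_add] at this
      rw [this] at h1
      rw [← coeff_zero_eq_constantCoeff_apply]
      exact h1
    have hWeq : W ^ κ * (1 - C c * X ^ m * W ^ (r - 1)) ^ (ρ + κ) = 1 := by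
      rw [hW, hkey W] at h2
      have hXne : (X : ℚ⟦X⟧) ^ ((q - 1) * κ) ≠ 0 := pow_ne_zero _ X_ne_zero
      have h3 : (X : ℚ⟦X⟧) ^ ((q - 1) * κ) * 1
          = X ^ ((q - 1) * κ) * (W ^ κ * (1 - C c * X ^ m * W ^ (r - 1)) ^ (ρ + κ)) := by
        rw [mul_one]; exact h2
      exact (mul_left_cancel₀ hXne h3).symm
    have : W = Z := hZuniq W ⟨hW1, hWeq⟩
    rw [hW, this]
end

section
/- Let q, r, k be positive integers, B = q(r-1)+k, A = k/r ∈ ℚ, and let a : ℕ → ℚ be as in the context. Then for every b ∈ ℕ, setting m = B·b + q, one has a(b) = (b! / (m·(b·(r-1)+1))) · binom(m/A, b) · A^b, where m/A = m·r/k ∈ ℚ. Equivalently, the genus-0 one-part (k,r,q)-leaky completed-cycles Hurwitz number lh^{k,r,q}_{0;(m)} equals b!/(m·(b(r-1)+1)) · binom(m·r/k, b) · (k/r)^b whenever b = (m-q)/(q(r-1)+k) is a non-negative integer. -/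
open Finset Nat

/-- The generalized binomial coefficient `binom(α, n) = α(α-1)⋯(α-n+1)/n!`. -/
noncomputable def qbinom (α : ℚ) (n : ℕ) : ℚ :=
  (∏ i ∈ Finset.range n, (α - i)) / n !

noncomputable def rpol (d : ℚ) (n : ℕ) : Polynomial ℚ :=
  if n = 0 then 1 else
    Polynomial.C ((n ! : ℚ))⁻¹ *
      (Polynomial.X * ∏ i ∈ Finset.range (n - 1),
        (Polynomial.X + Polynomial.C (d * n - (i + 1))))

noncomputable def ros (d : ℚ) (n : ℕ) (x : ℚ) : ℚ := (rpol d n).eval x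

@[simp] lemma ros_zero (d x : ℚ) : ros d 0 x = 1 := by
  simp [ros, rpol]

lemma ros_succ (d x : ℚ) (m : ℕ) :
    ros d (m + 1) x =
      ((m + 1)! : ℚ)⁻¹ * (x * ∏ i ∈ Finset.range m, (x + (d * (m + 1) - (i + 1)))) := by
  simp [ros, rpol, Polynomial.eval_prod]

lemma ros_apply_zero (d : ℚ) (n : ℕ) (hn : n ≠ 0) : ros d n 0 = 0 := by
  obtain ⟨m, rfl⟩ := Nat.exists_eq_succ_of_ne_zero hn
  simp [ros_succ]

/-- The Pascal-type recurrence for the Rothe polynomials. -/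
lemma ros_pascal (d : ℚ) (m : ℕ) (x : ℚ) :
    ros d (m + 1) x = ros d (m + 1) (x - 1) + ros d m (x + d - 1) := by
  cases m with
  | zero => simp [ros_succ]
  | succ t =>
    rw [ros_succ, ros_succ, ros_succ]
    set Q : ℚ := ∏ i ∈ Finset.range t, (x + d * t + 2 * d - i - 2) with hQ
    have h1 : ∏ i ∈ Finset.range (t + 1), (x + (d * ((t:ℚ) + 1 + 1) - (i + 1)))
        = Q * (x + d * t + 2 * d - 1) := by
      rw [Finset.prod_range_succ']
      congr 1
      · refine Finset.prod_congr rfl fun i _ => ?_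
        push_cast; ring
      · push_cast; ring
    have h2 : ∏ i ∈ Finset.range (t + 1), (x - 1 + (d * ((t:ℚ) + 1 + 1) - (i + 1)))
        = Q * (x + d * t + 2 * d - t - 2) := by
      rw [Finset.prod_range_succ]
      congr 1
      · refine Finset.prod_congr rfl fun i _ => ?_
        push_cast; ring
      · push_cast; ring
    have h3 : ∏ i ∈ Finset.range t, (x + d - 1 + (d * ((t:ℚ) + 1) - (i + 1))) = Q := by
      refine Finset.prod_congr rfl fun i _ => ?_
      push_cast; ring
    have hcast : ((t:ℚ) + 1 + 1) = (((t + 1 : ℕ) : ℚ) + 1) := by push_cast; ring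
    rw [← hcast] at *
    rw [h1, h2, h3]
    have hf1 : ((t + 1 + 1)! : ℚ) = ((t : ℚ) + 2) * ((t + 1)! : ℚ) := by
      rw [Nat.factorial_succ (t + 1)]
      push_cast; ring
    have hf0 : ((t + 1)! : ℚ) ≠ 0 := by positivity
    rw [hf1]
    have h2' : (0:ℚ) < (t:ℚ) + 2 := by positivity
    field_simp
    ring

/-- A polynomial over `ℚ` vanishing at all naturals is zero. -/
lemma poly_zero_of_nat_roots (p : Polynomial ℚ) (h : ∀ n : ℕ, p.eval (n : ℚ) = 0) : p = 0 := by
  refine Polynomial.eq_zero_of_infinite_isRoot p ?_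
  exact Set.infinite_of_injective_forall_mem
    (f := fun n : ℕ => (n : ℚ)) Nat.cast_injective (fun n => h n)

/-- Rothe's convolution identity. -/
lemma rothe (d x y : ℚ) (n : ℕ) :
    ∑ ij ∈ Finset.HasAntidiagonal.antidiagonal n, ros d ij.1 x * ros d ij.2 y = ros d n (x + y) := by
  induction n generalizing y with
  | zero => simp
  | succ n IH =>
    set p : Polynomial ℚ :=
      (∑ ij ∈ Finset.HasAntidiagonal.antidiagonal (n + 1), Polynomial.C (ros d ij.1 x) * rpol d ij.2)
        - (rpol d (n + 1)).comp (Polynomial.X + Polynomial.C x) with hp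
    have hev : ∀ z : ℚ, p.eval z =
        (∑ ij ∈ Finset.HasAntidiagonal.antidiagonal (n + 1), ros d ij.1 x * ros d ij.2 z)
          - ros d (n + 1) (x + z) := by
      intro z
      simp [hp, Polynomial.eval_finset_sum, Polynomial.eval_comp, ros, add_comm z x]
    have hper : ∀ z : ℚ, p.eval (z + 1) = p.eval z := by
      intro z
      rw [hev, hev]
      have key : (∑ ij ∈ Finset.HasAntidiagonal.antidiagonal (n + 1), ros d ij.1 x * ros d ij.2 (z + 1))
          - (∑ ij ∈ Finset.HasAntidiagonal.antidiagonal (n + 1), ros d ij.1 x * ros d ij.2 z)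
          = ros d n (x + (z + d)) := by
        rw [← Finset.sum_sub_distrib]
        have : ∀ ij ∈ Finset.HasAntidiagonal.antidiagonal (n + 1),
            ros d ij.1 x * ros d ij.2 (z + 1) - ros d ij.1 x * ros d ij.2 z
              = ros d ij.1 x * (ros d ij.2 (z + 1) - ros d ij.2 z) := fun _ _ => by ring
        rw [Finset.sum_congr rfl this, Finset.Nat.sum_antidiagonal_succ']
        have h0 : ros d ((n+1, 0) : ℕ × ℕ).1 x *
            (ros d ((n+1, 0) : ℕ × ℕ).2 (z + 1) - ros d ((n+1, 0) : ℕ × ℕ).2 z) = 0 := by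
          simp
        rw [h0, zero_add]
        have h1 : ∀ ij ∈ Finset.HasAntidiagonal.antidiagonal n,
            ros d ij.1 x * (ros d (ij.2 + 1) (z + 1) - ros d (ij.2 + 1) z)
              = ros d ij.1 x * ros d ij.2 (z + d) := by
          intro ij _
          have := ros_pascal d ij.2 (z + 1)
          rw [show z + 1 - 1 = z by ring] at this
          rw [show z + 1 + d - 1 = z + d by ring] at this
          rw [this]; ring
        rw [Finset.sum_congr rfl h1, IH]
      have key2 : ros d (n + 1) (x + (z + 1)) - ros d (n + 1) (x + z) = ros d n (x + (z + d)) := by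
        have := ros_pascal d n (x + (z + 1))
        rw [show x + (z + 1) - 1 = x + z by ring] at this
        rw [show x + (z + 1) + d - 1 = x + (z + d) by ring] at this
        rw [this]; ring
      linarith [key, key2]
    have h0 : p.eval 0 = 0 := by
      rw [hev]
      have : (∑ ij ∈ Finset.HasAntidiagonal.antidiagonal (n + 1), ros d ij.1 x * ros d ij.2 (0:ℚ))
          = ros d (n + 1) x := by
        rw [Finset.sum_eq_single ((n+1 : ℕ), (0 : ℕ))]
        · simp
        · intro ij hij hne
          have hsum := Finset.HasAntidiagonal.mem_antidiagonal.mp hij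
          have : ij.2 ≠ 0 := by
            intro h2
            apply hne
            have : ij.1 = n + 1 := by omega
            exact Prod.ext this h2
          rw [ros_apply_zero d ij.2 this, mul_zero]
        · intro h
          exact absurd (Finset.HasAntidiagonal.mem_antidiagonal.mpr (by omega)) h
      rw [this, add_zero, sub_self]
    have hzero : p = 0 := by
      apply poly_zero_of_nat_roots
      intro m
      induction m with
      | zero => simpa using h0
      | succ m IHm => rw [Nat.cast_succ, hper, IHm]
    have := hev y
    rw [hzero] at this
    simp only [Polynomial.eval_zero] at this
    linarith

/-- Decomposition of a sum over `antidiagonalTuple (k+1) n`. -/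
lemma sum_antidiagonalTuple_succ {M : Type*} [AddCommMonoid M] (k n : ℕ)
    (F : (Fin (k + 1) → ℕ) → M) :
    ∑ t ∈ Finset.Nat.antidiagonalTuple (k + 1) n, F t
      = ∑ ij ∈ Finset.HasAntidiagonal.antidiagonal n,
          ∑ t ∈ Finset.Nat.antidiagonalTuple k ij.2, F (Fin.cons ij.1 t) := by
  rw [Finset.sum_sigma' (Finset.HasAntidiagonal.antidiagonal n)
    (fun ij => Finset.Nat.antidiagonalTuple k ij.2) (fun ij t => F (Fin.cons ij.1 t))]
  refine Finset.sum_nbij'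
    (fun u => (⟨(u 0, ∑ i : Fin k, u i.succ), Fin.tail u⟩ :
      (_ : ℕ × ℕ) × (Fin k → ℕ)))
    (fun x => Fin.cons x.1.1 x.2) ?_ ?_ ?_ ?_ ?_
  · intro u hu
    simp only [Finset.Nat.mem_antidiagonalTuple] at hu
    simp only [Finset.mem_sigma, Finset.HasAntidiagonal.mem_antidiagonal, Finset.Nat.mem_antidiagonalTuple]
    refine ⟨?_, rfl⟩
    rw [← hu, Fin.sum_univ_succ]
  · rintro ⟨⟨i, j⟩, t⟩ h
    simp only [Finset.mem_sigma, Finset.HasAntidiagonal.mem_antidiagonal,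
      Finset.Nat.mem_antidiagonalTuple] at h ⊢
    rw [Fin.sum_univ_succ]
    simp only [Fin.cons_zero, Fin.cons_succ]
    rw [h.2]
    exact h.1
  · intro u hu
    exact Fin.cons_self_tail u
  · rintro ⟨⟨i, j⟩, t⟩ h
    simp only [Finset.mem_sigma, Finset.HasAntidiagonal.mem_antidiagonal,
      Finset.Nat.mem_antidiagonalTuple] at h
    refine Sigma.ext ?_ ?_
    · simp only [Fin.cons_zero, Fin.cons_succ]
      exact Prod.ext rfl h.2
    · simp [Fin.tail_cons]
  · intro u hu
    exact (Fin.cons_self_tail u).symm ▸ rfl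

/-- The `ρ`-fold Rothe convolution identity over `antidiagonalTuple`. -/
lemma rothe_tuple (d x : ℚ) : ∀ (ρ n : ℕ),
    ∑ t ∈ Finset.Nat.antidiagonalTuple ρ n, ∏ j, ros d (t j) x = ros d n (ρ * x) := by
  intro ρ
  induction ρ with
  | zero =>
    intro n
    cases n with
    | zero => simp
    | succ n =>
      rw [Finset.Nat.antidiagonalTuple_zero_succ, Finset.sum_empty,
        show ((0:ℕ):ℚ) * x = 0 by simp,
        ros_apply_zero d (n+1) (Nat.succ_ne_zero n)]
  | succ ρ IH =>
    intro n
    rw [sum_antidiagonalTuple_succ]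
    have : ∀ ij ∈ Finset.HasAntidiagonal.antidiagonal n,
        (∑ t ∈ Finset.Nat.antidiagonalTuple ρ ij.2, ∏ j, ros d ((Fin.cons ij.1 t : Fin (ρ+1) → ℕ) j) x)
          = ros d ij.1 x * ros d ij.2 ((ρ : ℚ) * x) := by
      intro ij _
      rw [← IH ij.2, Finset.mul_sum]
      refine Finset.sum_congr rfl fun t _ => ?_
      rw [Fin.prod_univ_succ]
      simp [Fin.cons_zero, Fin.cons_succ]
    rw [Finset.sum_congr rfl this, rothe]
    congr 1
    push_cast
    ring

/-- Let `q, r, k` be positive integers, `B = q(r-1)+k`,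
`A = k/r ∈ ℚ`, and let `a : ℕ → ℚ` be the genus-0 one-part `(k,r,q)`-leaky
completed-cycles Hurwitz numbers, determined by `a 0 = 1/q` and the tropical
cut-and-join recursion.  Then for every `b ∈ ℕ`, setting `m = B·b + q`,
`a b = (b! / (m·(b·(r-1)+1))) · binom(m/A, b) · A^b`, i.e. the genus-0 one-part
leaky Hurwitz number `lh^{k,r,q}_{0;(m)}` equals
`b!/(m·(b(r-1)+1)) · binom(m·r/k, b) · (k/r)^b`. -/
theorem leaky_one_part_closed_formula
    (q r k : ℕ) (hq : 0 < q) (hr : 0 < r) (hk : 0 < k)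
    (B : ℕ) (hB : B = q * (r - 1) + k)
    (a : ℕ → ℚ)
    (ha0 : a 0 = 1 / q)
    (harec : ∀ b : ℕ, 1 ≤ b → a b = (1 / r : ℚ) *
      ∑ t ∈ Finset.Nat.antidiagonalTuple r (b - 1),
        (((b - 1)! : ℚ) / ∏ j, ((t j)! : ℚ)) *
          ∏ j, (((B * t j + q : ℕ) : ℚ) * a (t j))) :
    ∀ b : ℕ,
      a b = ((b ! : ℚ) / (((B * b + q : ℕ) : ℚ) * (b * (r - 1) + 1))) *
        qbinom (((B * b + q : ℕ) : ℚ) * r / k) b * ((k : ℚ) / r) ^ b := by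
  have hrq : ((r : ℚ)) ≠ 0 := Nat.cast_ne_zero.mpr hr.ne'
  have hkq : ((k : ℚ)) ≠ 0 := Nat.cast_ne_zero.mpr hk.ne'
  have hqq : ((q : ℚ)) ≠ 0 := Nat.cast_ne_zero.mpr hq.ne'
  have hr1 : (1 : ℚ) ≤ (r : ℚ) := by exact_mod_cast hr
  set A : ℚ := (k : ℚ) / r with hAdef
  set s : ℚ := q * r / k with hsdef
  set d : ℚ := s * ((r : ℚ) - 1) + r with hddef
  have hA : A ≠ 0 := by rw [hAdef]; positivity
  have hBcast : ((B : ℕ) : ℚ) = (q : ℚ) * ((r : ℚ) - 1) + k := by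
    rw [hB]
    push_cast [Nat.cast_sub hr]
    ring
  have hBn : ∀ n : ℕ, ((B * n + q : ℕ) : ℚ) = A * (d * n + s) := by
    intro n
    push_cast [hBcast]
    rw [hAdef, hsdef, hddef, hsdef]
    field_simp
  have hBpos : ∀ n : ℕ, ((B * n + q : ℕ) : ℚ) ≠ 0 := by
    intro n
    exact Nat.cast_ne_zero.mpr (by positivity)
  have hds : ∀ n : ℕ, d * n + s ≠ 0 := by
    intro n h
    exact hBpos n (by rw [hBn n, h, mul_zero])
  have hE : ∀ n : ℕ, ((n : ℚ) * ((r : ℚ) - 1) + 1) ≠ 0 := by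
    intro n
    have h1 : (0:ℚ) ≤ (n : ℚ) * ((r : ℚ) - 1) :=
      mul_nonneg (Nat.cast_nonneg n) (by linarith)
    positivity
  have hratio : ∀ n : ℕ, ((B * n + q : ℕ) : ℚ) * r / k = d * n + s := by
    intro n
    rw [hBn n, hAdef]
    field_simp
  -- the key per-term identity
  have hterm : ∀ n : ℕ,
      ((B * n + q : ℕ) : ℚ) *
        (((n ! : ℚ) / (((B * n + q : ℕ) : ℚ) * (n * ((r:ℚ) - 1) + 1))) *
          qbinom (((B * n + q : ℕ) : ℚ) * r / k) n * A ^ n) / (n ! : ℚ)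
      = A ^ n * ros d n (s + 1) := by
    intro n
    rw [hratio n]
    cases n with
    | zero =>
      simp [qbinom, hBpos 0]
      exact (mul_inv_cancel₀ hqq)
    | succ m =>
      rw [qbinom]
      rw [Finset.prod_range_succ]
      have hsplit : d * ((m:ℚ) + 1) + s - m
          = (s + 1) * (((m + 1 : ℕ) : ℚ) * ((r:ℚ) - 1) + 1) := by
        rw [hddef]
        push_cast
        ring
      have hprods : ∏ i ∈ Finset.range m, (d * ((m + 1 : ℕ) : ℚ) + s - i)
          = ∏ i ∈ Finset.range m, ((s + 1) + (d * ((m:ℚ) + 1) - (i + 1))) := by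
        refine Finset.prod_congr rfl fun i _ => ?_
        push_cast
        ring
      rw [ros_succ]
      push_cast at hsplit hprods ⊢
      rw [hsplit, hprods]
      have hfm : ((m + 1)! : ℚ) ≠ 0 := by positivity
      have hEm := hE (m + 1)
      push_cast at hEm
      have hBm := hBpos (m + 1)
      push_cast at hBm
      field_simp
  -- F n in terms of ros
  have hF : ∀ n : ℕ,
      ((n ! : ℚ) / (((B * n + q : ℕ) : ℚ) * (n * ((r:ℚ) - 1) + 1))) *
          qbinom (((B * n + q : ℕ) : ℚ) * r / k) n * A ^ n
        = (n ! : ℚ) * A ^ n * ros d n (s + 1) / ((B * n + q : ℕ) : ℚ) := by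
    intro n
    have h := hterm n
    have hfn : ((n ! : ℚ)) ≠ 0 := by positivity
    rw [div_eq_iff hfn] at h
    rw [eq_div_iff (hBpos n)]
    linear_combination h
  -- the key recursion identity for ros
  have hkey : ∀ m : ℕ, ros d m ((r:ℚ) * (s + 1)) * (d * ((m:ℚ) + 1) + s)
      = (r : ℚ) * ((m : ℚ) + 1) * ros d (m + 1) (s + 1) := by
    intro m
    cases m with
    | zero =>
      rw [ros_succ]
      simp only [ros_zero]
      rw [hddef]
      push_cast
      field_simp
      ring
    | succ t =>
      rw [ros_succ, ros_succ, Finset.prod_range_succ']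
      have hprods : ∏ i ∈ Finset.range t, ((r:ℚ) * (s + 1) + (d * ((t:ℚ) + 1) - ((i:ℚ) + 1)))
          = ∏ i ∈ Finset.range t, ((s + 1) + (d * ((t:ℚ) + 1 + 1) - ((i:ℚ) + 1 + 1))) := by
        refine Finset.prod_congr rfl fun i _ => ?_
        rw [hddef]
        push_cast
        ring
      push_cast
      rw [hprods]
      have hprods2 : ∏ x ∈ Finset.range t, ((s + 1) + (d * ((t:ℚ) + 1 + 1) - ((x:ℚ) + 1 + 1)))
          = ∏ x ∈ Finset.range t, ((s + 1) + (d * ((t:ℚ) + 1 + 1) - (((x:ℚ) + 1) + 1))) := by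
        refine Finset.prod_congr rfl fun i _ => ?_
        ring
      have hf1 : ((t + 1 + 1)! : ℚ) = ((t:ℚ) + 2) * ((t + 1)! : ℚ) := by
        rw [Nat.factorial_succ (t + 1)]
        push_cast; ring
      have hft : ((t + 1)! : ℚ) ≠ 0 := by positivity
      rw [hf1]
      have h2 : ((t:ℚ) + 2) ≠ 0 := by positivity
      field_simp
      ring
  intro b
  induction b using Nat.strong_induction_on with
  | _ b IH =>
    cases b with
    | zero =>
      rw [ha0]
      simp only [Nat.mul_zero, Nat.zero_add, Nat.cast_zero, Nat.factorial_zero]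
      simp [qbinom]
    | succ m =>
      rw [harec (m + 1) (Nat.succ_le_succ (Nat.zero_le m)), Nat.succ_sub_one]
      have hstep : ∀ t ∈ Finset.Nat.antidiagonalTuple r m,
          ((m ! : ℚ) / ∏ j, ((t j)! : ℚ)) * ∏ j, (((B * t j + q : ℕ) : ℚ) * a (t j))
            = (m ! : ℚ) * A ^ m * ∏ j, ros d (t j) (s + 1) := by
        intro t ht
        have hsum := Finset.Nat.mem_antidiagonalTuple.mp ht
        have hIH : ∀ j, a (t j) =
            (((t j) ! : ℚ) / (((B * t j + q : ℕ) : ℚ) * ((t j) * ((r:ℚ) - 1) + 1))) *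
              qbinom (((B * t j + q : ℕ) : ℚ) * r / k) (t j) * A ^ (t j) := by
          intro j
          refine IH (t j) (Nat.lt_succ_of_le ?_)
          rw [← hsum]
          exact Finset.single_le_sum (f := fun j => t j) (fun i _ => Nat.zero_le _)
            (Finset.mem_univ j)
        calc ((m ! : ℚ) / ∏ j, ((t j)! : ℚ)) * ∏ j, (((B * t j + q : ℕ) : ℚ) * a (t j))
            = (m ! : ℚ) * ∏ j, ((((B * t j + q : ℕ) : ℚ) * a (t j)) / ((t j)! : ℚ)) := by
              rw [Finset.prod_div_distrib]
              ring
          _ = (m ! : ℚ) * ∏ j, (A ^ (t j) * ros d (t j) (s + 1)) := by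
              congr 1
              refine Finset.prod_congr rfl fun j _ => ?_
              rw [hIH j, ← hterm (t j)]
          _ = (m ! : ℚ) * A ^ m * ∏ j, ros d (t j) (s + 1) := by
              rw [Finset.prod_mul_distrib, Finset.prod_pow_eq_pow_sum, hsum]
              ring
      rw [Finset.sum_congr rfl hstep, ← Finset.mul_sum, rothe_tuple]
      rw [hF (m + 1), hBn (m + 1)]
      have hdsm : d * ((m:ℚ) + 1) + s ≠ 0 := by
        have := hds (m + 1); push_cast at this; exact this
      have hkm : ros d m ((r:ℚ) * (s + 1))
          = (r:ℚ) * ((m:ℚ) + 1) * ros d (m + 1) (s + 1) / (d * ((m:ℚ) + 1) + s) := by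
        rw [eq_div_iff hdsm]
        linear_combination hkey m
      have hfac : ((m + 1)! : ℚ) = ((m:ℚ) + 1) * (m ! : ℚ) := by
        rw [Nat.factorial_succ]; push_cast; ring
      push_cast
      rw [hkm, hfac]
      field_simp
      ring
end

section
/- Let q, r, k be positive integers, B = q(r-1)+k, g = gcd(q·r,k), ρ = q·r/g, κ = k/g, and let X̂, Ŷ ∈ ℚ⟦z⟧ be as in the context. Then: (i) X̂^{(q-1)·κ} = Ŷ^κ · (1 - (k/r)·Ŷ^{r-1}·X̂^{r-1+k})^{ρ+κ} holds in ℚ⟦z⟧; and (ii) Ŷ equals the substitution Y(X̂) of X̂ into the unique power series Y ∈ ℚ⟦X⟧ supported in degrees ≥ q-1, with coefficient 1 in degree q-1, satisfying X^{(q-1)·κ} = Y^κ(1-(k/r)Y^{r-1}X^{r-1+k})^{ρ+κ}. (X̂ has zero constant term, so the substitution is well defined.) -/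
open Finset Nat PowerSeries

/-- The formal binomial series `(1+u)^α = Σ_{n≥0} binom(α,n)·u^n`, for a power
series `u` with zero constant term (for such `u`, the coefficient of `X^d` of
the infinite sum is the displayed finite sum, since `u^n` has order `≥ n`). -/
noncomputable def binomPow (α : ℚ) (u : PowerSeries ℚ) : PowerSeries ℚ :=
  PowerSeries.mk fun d =>
    ∑ n ∈ Finset.range (d + 1), qbinom α n * PowerSeries.coeff d (u ^ n)

/-- Substitution `f(u)` of a power series `u` with zero constant term into the
power series `f` (for such `u`, the coefficient of `X^d` of `Σ_n f_n u^n` is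
the displayed finite sum, since `u^n` has order `≥ n`). -/
noncomputable def psComp (f u : PowerSeries ℚ) : PowerSeries ℚ :=
  PowerSeries.mk fun d =>
    ∑ n ∈ Finset.range (d + 1), PowerSeries.coeff n f * PowerSeries.coeff d (u ^ n)

/-- The parametrisation `X̂(z) = z·(1+(k/r)·z^B)^{-r/k}`, where `B = q(r-1)+k`. -/
noncomputable def Xhat (q r k : ℕ) : PowerSeries ℚ :=
  PowerSeries.X *
    binomPow (-(r : ℚ) / k)
      (PowerSeries.C ((k : ℚ) / r) * PowerSeries.X ^ (q * (r - 1) + k))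

/-- The parametrisation `Ŷ(z) = z^{q-1}·(1+(k/r)·z^B)^{(r+k)/k}`, where `B = q(r-1)+k`. -/
noncomputable def Yhat (q r k : ℕ) : PowerSeries ℚ :=
  PowerSeries.X ^ (q - 1) *
    binomPow (((r : ℚ) + k) / k)
      (PowerSeries.C ((k : ℚ) / r) * PowerSeries.X ^ (q * (r - 1) + k))

lemma descPochhammer_smeval_rat (α : ℚ) (n : ℕ) :
    (descPochhammer ℤ n).smeval α = ∏ i ∈ Finset.range n, (α - i) := by
  induction n with
  | zero => simp [descPochhammer_zero, Polynomial.smeval_one]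
  | succ n ih =>
    rw [descPochhammer_succ_right, Polynomial.smeval_mul, ih, Finset.prod_range_succ]
    congr 1
    rw [Polynomial.smeval_sub, Polynomial.smeval_X, Polynomial.smeval_natCast]
    simp

lemma qbinom_eq_choose (α : ℚ) (n : ℕ) : qbinom α n = Ring.choose α n := by
  have h := Ring.descPochhammer_eq_factorial_smul_choose α n
  rw [descPochhammer_smeval_rat] at h
  have hfac : ((n ! : ℕ) : ℚ) ≠ 0 := by exact_mod_cast Nat.factorial_ne_zero n
  rw [qbinom, h, nsmul_eq_mul]
  field_simp

lemma qbinom_add (α β : ℚ) (t : ℕ) :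
    qbinom (α + β) t = ∑ p ∈ Finset.HasAntidiagonal.antidiagonal t, qbinom α p.1 * qbinom β p.2 := by
  simp only [qbinom_eq_choose]
  exact Ring.add_choose_eq t (Commute.all α β)

@[simp] lemma qbinom_zero_right (α : ℚ) : qbinom α 0 = 1 := by simp [qbinom]

lemma qbinom_zero_left {n : ℕ} (hn : 0 < n) : qbinom 0 n = 0 := by
  rw [qbinom, Finset.prod_eq_zero (Finset.mem_range.mpr hn)] <;> simp

lemma qbinom_one_left {n : ℕ} (hn : 2 ≤ n) : qbinom 1 n = 0 := by
  rw [qbinom, Finset.prod_eq_zero (Finset.mem_range.mpr (by omega : 1 < n))] <;> simp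

@[simp] lemma qbinom_one_one : qbinom 1 1 = 1 := by simp [qbinom]

namespace LeakyAux

open PowerSeries

lemma coeff_pow_zero_of_lt {u : PowerSeries ℚ} (hu : constantCoeff u = 0)
    {d n : ℕ} (h : d < n) : PowerSeries.coeff d (u ^ n) = 0 := by
  have hX : (X : PowerSeries ℚ) ^ n ∣ u ^ n :=
    pow_dvd_pow_of_dvd (PowerSeries.X_dvd_iff.mpr hu) n
  exact (PowerSeries.X_pow_dvd_iff.mp hX) d h

/-- evaluation of a coefficient sequence at `u`. -/
noncomputable def ev (a : ℕ → ℚ) (u : PowerSeries ℚ) : PowerSeries ℚ :=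
  PowerSeries.mk fun d =>
    ∑ n ∈ Finset.range (d + 1), a n * PowerSeries.coeff d (u ^ n)

lemma binomPow_eq_ev (α : ℚ) (u : PowerSeries ℚ) : binomPow α u = ev (qbinom α) u := rfl

lemma psComp_eq_ev (f u : PowerSeries ℚ) : psComp f u = ev (fun n => PowerSeries.coeff n f) u := rfl

lemma coeff_ev {u : PowerSeries ℚ} (hu : constantCoeff u = 0) (a : ℕ → ℚ)
    {d N : ℕ} (h : d < N) :
    PowerSeries.coeff d (ev a u) =
      PowerSeries.coeff d (∑ n ∈ Finset.range N, PowerSeries.C (a n) * u ^ n) := by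
  rw [map_sum]
  simp only [PowerSeries.coeff_C_mul]
  rw [ev, PowerSeries.coeff_mk]
  apply Finset.sum_subset
  · intro x hx
    simp only [Finset.mem_range] at *
    omega
  · intro x hx hxd
    simp only [Finset.mem_range, not_lt] at hxd
    rw [coeff_pow_zero_of_lt hu (by omega), mul_zero]

lemma ev_mul {u : PowerSeries ℚ} (hu : constantCoeff u = 0) (a b c : ℕ → ℚ)
    (h : ∀ t, c t = ∑ p ∈ Finset.HasAntidiagonal.antidiagonal t, a p.1 * b p.2) :
    ev a u * ev b u = ev c u := by
  ext d
  rw [PowerSeries.coeff_mul]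
  have step1 : ∑ p ∈ Finset.HasAntidiagonal.antidiagonal d,
      PowerSeries.coeff p.1 (ev a u) * PowerSeries.coeff p.2 (ev b u) =
      PowerSeries.coeff d
        ((∑ n ∈ Finset.range (d+1), PowerSeries.C (a n) * u ^ n) *
         (∑ n ∈ Finset.range (d+1), PowerSeries.C (b n) * u ^ n)) := by
    rw [PowerSeries.coeff_mul]
    apply Finset.sum_congr rfl
    intro p hp
    have h1 : p.1 < d + 1 := Nat.lt_succ_of_le (Finset.HasAntidiagonal.antidiagonal.fst_le hp)
    have h2 : p.2 < d + 1 := Nat.lt_succ_of_le (Finset.HasAntidiagonal.antidiagonal.snd_le hp)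
    rw [coeff_ev hu a h1, coeff_ev hu b h2]
  rw [step1, Finset.sum_mul_sum]
  have expand : ∀ n ∈ Finset.range (d+1), ∀ m ∈ Finset.range (d+1),
      (PowerSeries.C (a n) * u ^ n) * (PowerSeries.C (b m) * u ^ m) =
      PowerSeries.C (a n * b m) * u ^ (n + m) := by
    intro n _ m _
    rw [map_mul, pow_add]; ring
  rw [map_sum]
  simp only [map_sum]
  -- LHS is now double sum of coeff d (C (a n) u^n * C (b m) u^m)
  have lhs_eq : ∑ n ∈ Finset.range (d+1), ∑ m ∈ Finset.range (d+1),
      PowerSeries.coeff d ((PowerSeries.C (a n) * u ^ n) * (PowerSeries.C (b m) * u ^ m)) =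
      ∑ p ∈ Finset.range (d+1) ×ˢ Finset.range (d+1),
        a p.1 * b p.2 * PowerSeries.coeff d (u ^ (p.1 + p.2)) := by
    rw [Finset.sum_product]
    apply Finset.sum_congr rfl
    intro n hn
    apply Finset.sum_congr rfl
    intro m hm
    rw [expand n hn m hm, PowerSeries.coeff_C_mul]
  rw [lhs_eq]
  -- RHS
  rw [ev, PowerSeries.coeff_mk]
  have rhs_eq : ∑ t ∈ Finset.range (d+1), c t * PowerSeries.coeff d (u ^ t) =
      ∑ p ∈ (Finset.range (d+1)).biUnion Finset.HasAntidiagonal.antidiagonal,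
        a p.1 * b p.2 * PowerSeries.coeff d (u ^ (p.1 + p.2)) := by
    rw [Finset.sum_biUnion]
    · apply Finset.sum_congr rfl
      intro t _
      rw [h t, Finset.sum_mul]
      apply Finset.sum_congr rfl
      intro p hp
      rw [Finset.HasAntidiagonal.mem_antidiagonal.mp hp]
    · intro s _ t _ hst
      simp only [Finset.disjoint_left]
      intro p hps hpt
      exact hst (by rw [← Finset.HasAntidiagonal.mem_antidiagonal.mp hps, Finset.HasAntidiagonal.mem_antidiagonal.mp hpt])
  rw [rhs_eq]
  symm
  apply Finset.sum_subset
  · intro p hp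
    simp only [Finset.mem_biUnion, Finset.mem_range, Finset.HasAntidiagonal.mem_antidiagonal] at hp
    obtain ⟨t, ht, hpt⟩ := hp
    simp only [Finset.mem_product, Finset.mem_range]
    omega
  · intro p hp hpn
    have : d < p.1 + p.2 := by
      by_contra hc
      push_neg at hc
      exact hpn (Finset.mem_biUnion.mpr ⟨p.1 + p.2, Finset.mem_range.mpr (by omega),
        Finset.HasAntidiagonal.mem_antidiagonal.mpr rfl⟩)
    rw [coeff_pow_zero_of_lt hu this, mul_zero]

end LeakyAux

namespace LeakyAux

variable {u : PowerSeries ℚ}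

lemma binomPow_zero (u : PowerSeries ℚ) : binomPow 0 u = 1 := by
  ext d
  rw [binomPow, PowerSeries.coeff_mk]
  rw [Finset.sum_eq_single 0]
  · simp
  · intro n _ hn
    rw [qbinom_zero_left (Nat.pos_of_ne_zero hn), zero_mul]
  · intro h
    exact absurd (Finset.mem_range.mpr (Nat.succ_pos d)) h

lemma binomPow_one' (hu : PowerSeries.constantCoeff u = 0) : binomPow 1 u = 1 + u := by
  ext d
  rw [binomPow, PowerSeries.coeff_mk]
  rcases Nat.eq_zero_or_pos d with hd | hd
  · subst hd
    simp [hu]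
  · have hf : ∀ n ∈ Finset.range (d+1), n ≠ 0 ∧ n ≠ 1 →
        qbinom 1 n * PowerSeries.coeff d (u ^ n) = 0 := by
      intro n hn hn01
      rw [qbinom_one_left (by omega), zero_mul]
    rw [Finset.sum_eq_add_of_mem 0 1 (Finset.mem_range.mpr (by omega))
      (Finset.mem_range.mpr (by omega)) (by omega) hf]
    simp only [qbinom_zero_right, pow_zero, pow_one, qbinom_one_one, one_mul, map_add]


lemma binomPow_add (hu : PowerSeries.constantCoeff u = 0) (α β : ℚ) :
    binomPow α u * binomPow β u = binomPow (α + β) u := by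
  rw [binomPow_eq_ev, binomPow_eq_ev, binomPow_eq_ev]
  exact ev_mul hu _ _ _ (fun t => qbinom_add α β t)

lemma binomPow_pow (hu : PowerSeries.constantCoeff u = 0) (α : ℚ) (m : ℕ) :
    (binomPow α u) ^ m = binomPow (m * α) u := by
  induction m with
  | zero => simp [binomPow_zero]
  | succ m ih =>
    rw [pow_succ, ih, binomPow_add hu]
    norm_num
    ring_nf

lemma binomPow_mul_inv (hu : PowerSeries.constantCoeff u = 0) (α : ℚ) :
    binomPow α u * binomPow (-α) u = 1 := by
  rw [binomPow_add hu, add_neg_cancel, binomPow_zero]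

lemma one_sub_mul_binomPow_neg_one (hu : PowerSeries.constantCoeff u = 0) :
    1 - u * binomPow (-1) u = binomPow (-1) u := by
  have h := binomPow_mul_inv hu 1
  rw [binomPow_one' hu] at h
  have := h
  rw [add_mul, one_mul] at this
  linear_combination -this

lemma constantCoeff_binomPow (hu : PowerSeries.constantCoeff u = 0) (α : ℚ) :
    PowerSeries.constantCoeff (binomPow α u) = 1 := by
  rw [← PowerSeries.coeff_zero_eq_constantCoeff_apply, binomPow, PowerSeries.coeff_mk]
  simp

end LeakyAux

namespace LeakyAux

variable {u : PowerSeries ℚ}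

lemma psComp_mul (hu : PowerSeries.constantCoeff u = 0) (f g : PowerSeries ℚ) :
    psComp (f * g) u = psComp f u * psComp g u := by
  rw [psComp_eq_ev, psComp_eq_ev, psComp_eq_ev]
  exact (ev_mul hu _ _ _ (fun t => PowerSeries.coeff_mul t f g)).symm

lemma psComp_C (a : ℚ) (u : PowerSeries ℚ) : psComp (PowerSeries.C a) u = PowerSeries.C a := by
  ext d
  rw [psComp, PowerSeries.coeff_mk, Finset.sum_eq_single 0]
  · rcases Nat.eq_zero_or_pos d with hd | hd
    · subst hd; simp [PowerSeries.coeff_C]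
    · have hd0 : d ≠ 0 := by omega
      simp [PowerSeries.coeff_C, PowerSeries.coeff_one, hd0]
  · intro n _ hn
    simp [PowerSeries.coeff_C, hn]
  · intro h
    exact absurd (Finset.mem_range.mpr (Nat.succ_pos d)) h

lemma psComp_one (u : PowerSeries ℚ) : psComp 1 u = 1 := by
  have := psComp_C 1 u
  simpa using this

lemma psComp_X (hu : PowerSeries.constantCoeff u = 0) : psComp PowerSeries.X u = u := by
  ext d
  rw [psComp, PowerSeries.coeff_mk]
  rcases Nat.eq_zero_or_pos d with hd | hd
  · subst hd
    simp [hu]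
  · rw [Finset.sum_eq_single 1]
    · simp
    · intro n _ hn
      simp [PowerSeries.coeff_X, hn]
    · intro h
      exact absurd (Finset.mem_range.mpr (by omega)) h

lemma psComp_pow (hu : PowerSeries.constantCoeff u = 0) (f : PowerSeries ℚ) (m : ℕ) :
    psComp (f ^ m) u = (psComp f u) ^ m := by
  induction m with
  | zero => simpa using psComp_one u
  | succ m ih => rw [pow_succ, psComp_mul hu, ih, pow_succ]

lemma psComp_add (f g u : PowerSeries ℚ) : psComp (f + g) u = psComp f u + psComp g u := by
  ext d
  simp [psComp, add_mul, Finset.sum_add_distrib]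

lemma psComp_neg (f u : PowerSeries ℚ) : psComp (-f) u = -psComp f u := by
  ext d
  simp [psComp, Finset.sum_neg_distrib]

lemma psComp_sub (f g u : PowerSeries ℚ) : psComp (f - g) u = psComp f u - psComp g u := by
  rw [sub_eq_add_neg, psComp_add, psComp_neg, sub_eq_add_neg]

lemma coeff_mul_exact {f g : PowerSeries ℚ} {a b : ℕ}
    (hf : (PowerSeries.X : PowerSeries ℚ) ^ a ∣ f)
    (hg : (PowerSeries.X : PowerSeries ℚ) ^ b ∣ g) :
    PowerSeries.coeff (a + b) (f * g) = PowerSeries.coeff a f * PowerSeries.coeff b g := by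
  rw [PowerSeries.coeff_mul, Finset.sum_eq_single (a, b)]
  · intro p hp hpab
    rw [Finset.HasAntidiagonal.mem_antidiagonal] at hp
    rcases Nat.lt_or_ge p.1 a with h1 | h1
    · rw [PowerSeries.X_pow_dvd_iff.mp hf p.1 h1, zero_mul]
    · have : p.2 < b := by
        rcases Nat.lt_or_ge p.2 b with h2 | h2
        · exact h2
        · exfalso
          apply hpab
          have : p.1 = a ∧ p.2 = b := by omega
          exact Prod.ext this.1 this.2
      rw [PowerSeries.X_pow_dvd_iff.mp hg p.2 this, mul_zero]
  · intro h
    exact absurd (Finset.HasAntidiagonal.mem_antidiagonal.mpr (rfl : (a, b).1 + (a, b).2 = a + b)) h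

lemma X_pow_dvd_pow {f : PowerSeries ℚ} {a : ℕ}
    (hf : (PowerSeries.X : PowerSeries ℚ) ^ a ∣ f) (m : ℕ) :
    (PowerSeries.X : PowerSeries ℚ) ^ (a * m) ∣ f ^ m := by
  rw [pow_mul]
  exact pow_dvd_pow_of_dvd hf m

lemma coeff_pow_exact {f : PowerSeries ℚ} {a : ℕ}
    (hf : (PowerSeries.X : PowerSeries ℚ) ^ a ∣ f) (m : ℕ) :
    PowerSeries.coeff (a * m) (f ^ m) = (PowerSeries.coeff a f) ^ m := by
  induction m with
  | zero => simp
  | succ m ih =>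
    have : a * (m + 1) = a * m + a := by ring
    rw [this, pow_succ, coeff_mul_exact (X_pow_dvd_pow hf m) hf, ih, pow_succ]

end LeakyAux

namespace LeakyAux

lemma uniq (q κ e rm : ℕ) (hq : 0 < q) (hκ : 0 < κ) (c : ℚ) (A : PowerSeries ℚ)
    (hA : (PowerSeries.X : PowerSeries ℚ) ∣ A)
    (W₁ W₂ : PowerSeries ℚ)
    (h1lt : ∀ m, m < q - 1 → PowerSeries.coeff m W₁ = 0)
    (h1eq : PowerSeries.coeff (q - 1) W₁ = 1)
    (h2lt : ∀ m, m < q - 1 → PowerSeries.coeff m W₂ = 0)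
    (h2eq : PowerSeries.coeff (q - 1) W₂ = 1)
    (heq : W₁ ^ κ * (1 - PowerSeries.C c * W₁ ^ rm * A) ^ e =
           W₂ ^ κ * (1 - PowerSeries.C c * W₂ ^ rm * A) ^ e) :
    W₁ = W₂ := by
  set p := q - 1 with hp
  have hd1 : (PowerSeries.X : PowerSeries ℚ) ^ p ∣ W₁ := PowerSeries.X_pow_dvd_iff.mpr h1lt
  have hd2 : (PowerSeries.X : PowerSeries ℚ) ^ p ∣ W₂ := PowerSeries.X_pow_dvd_iff.mpr h2lt
  have hA0 : PowerSeries.constantCoeff A = 0 := PowerSeries.X_dvd_iff.mp hA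
  set V₁ := (1 : PowerSeries ℚ) - PowerSeries.C c * W₁ ^ rm * A with hV1
  set V₂ := (1 : PowerSeries ℚ) - PowerSeries.C c * W₂ ^ rm * A with hV2
  ext n
  induction n using Nat.strong_induction_on with
  | _ n IH =>
  have hDdvd : (PowerSeries.X : PowerSeries ℚ) ^ n ∣ (W₁ - W₂) :=
    PowerSeries.X_pow_dvd_iff.mpr (fun m hm => by rw [map_sub, IH m hm, sub_self])
  set S := ∑ i ∈ Finset.range κ, W₁ ^ i * W₂ ^ (κ - 1 - i) with hS
  have hSdvd : (PowerSeries.X : PowerSeries ℚ) ^ (p * (κ - 1)) ∣ S := by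
    apply Finset.dvd_sum
    intro i hi
    have hik : p * i + p * (κ - 1 - i) = p * (κ - 1) := by
      rw [← Nat.left_distrib]
      congr 1
      have := Finset.mem_range.mp hi
      omega
    rw [← hik, pow_add]
    exact mul_dvd_mul (X_pow_dvd_pow hd1 i) (X_pow_dvd_pow hd2 (κ - 1 - i))
  have hScoeff : PowerSeries.coeff (p * (κ - 1)) S = κ := by
    rw [hS, map_sum]
    rw [Finset.sum_congr rfl (fun i hi => ?_), Finset.sum_const, Finset.card_range,
      nsmul_eq_mul, mul_one]
    have hik : p * i + p * (κ - 1 - i) = p * (κ - 1) := by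
      rw [← Nat.left_distrib]
      congr 1
      have := Finset.mem_range.mp hi
      omega
    rw [← hik, coeff_mul_exact (X_pow_dvd_pow hd1 i) (X_pow_dvd_pow hd2 (κ - 1 - i)),
      coeff_pow_exact hd1, coeff_pow_exact hd2, h1eq, h2eq, one_pow, one_pow, mul_one]
  have hgeom : S * (W₁ - W₂) = W₁ ^ κ - W₂ ^ κ := geom_sum₂_mul W₁ W₂ κ
  have h0 : W₁ ^ κ * V₁ ^ e - W₂ ^ κ * V₂ ^ e = 0 := sub_eq_zero.mpr heq
  have key : (W₁ - W₂) * (S * V₁ ^ e) + W₂ ^ κ * (V₁ ^ e - V₂ ^ e) = 0 := by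
    linear_combination h0 + V₁ ^ e * hgeom
  -- second summand has high order
  have hU2 : (PowerSeries.X : PowerSeries ℚ) ^ (p * κ + (n + 1)) ∣ W₂ ^ κ * (V₁ ^ e - V₂ ^ e) := by
    have hW21 : (PowerSeries.X : PowerSeries ℚ) ^ n ∣ (W₂ - W₁) := by
      rw [← neg_sub W₁ W₂]
      exact dvd_neg.mpr hDdvd
    have hWdiff : (PowerSeries.X : PowerSeries ℚ) ^ n ∣ (W₂ ^ rm - W₁ ^ rm) :=
      dvd_trans hW21 (sub_dvd_pow_sub_pow W₂ W₁ rm)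
    have hVdiff : (PowerSeries.X : PowerSeries ℚ) ^ (n + 1) ∣ (V₁ - V₂) := by
      have hVsub : V₁ - V₂ = PowerSeries.C c * ((W₂ ^ rm - W₁ ^ rm) * A) := by
        rw [hV1, hV2]; ring
      rw [hVsub, pow_add, pow_one]
      exact Dvd.dvd.mul_left (mul_dvd_mul hWdiff hA) _
    have hUdiff : (PowerSeries.X : PowerSeries ℚ) ^ (n + 1) ∣ (V₁ ^ e - V₂ ^ e) :=
      dvd_trans hVdiff (sub_dvd_pow_sub_pow V₁ V₂ e)
    rw [pow_add]
    exact mul_dvd_mul (X_pow_dvd_pow hd2 κ) hUdiff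
  have hcoeff2 : PowerSeries.coeff (n + p * (κ - 1)) (W₂ ^ κ * (V₁ ^ e - V₂ ^ e)) = 0 := by
    apply PowerSeries.X_pow_dvd_iff.mp hU2
    have : p * (κ - 1) ≤ p * κ := Nat.mul_le_mul_left p (by omega)
    omega
  have hSU : (PowerSeries.X : PowerSeries ℚ) ^ (p * (κ - 1)) ∣ S * V₁ ^ e :=
    Dvd.dvd.mul_right hSdvd _
  have hU1const : PowerSeries.coeff 0 (V₁ ^ e) = 1 := by
    rw [PowerSeries.coeff_zero_eq_constantCoeff, map_pow, hV1]
    simp [hA0]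
  have hcoeff1 : PowerSeries.coeff (n + p * (κ - 1)) ((W₁ - W₂) * (S * V₁ ^ e)) =
      PowerSeries.coeff n (W₁ - W₂) * κ := by
    rw [coeff_mul_exact hDdvd hSU]
    congr 1
    have h00 : p * (κ - 1) = p * (κ - 1) + 0 := rfl
    rw [h00, coeff_mul_exact hSdvd (by rw [pow_zero] ; exact one_dvd _), hScoeff, hU1const, mul_one]
  have hfin := congrArg (PowerSeries.coeff (n + p * (κ - 1))) key
  rw [map_add, hcoeff1, hcoeff2, add_zero, map_zero] at hfin
  have hκQ : (κ : ℚ) ≠ 0 := Nat.cast_ne_zero.mpr (by omega)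
  have : PowerSeries.coeff n (W₁ - W₂) = 0 := by
    rcases mul_eq_zero.mp hfin with h | h
    · exact h
    · exact absurd h hκQ
  rw [map_sub, sub_eq_zero] at this
  exact this

end LeakyAux


open LeakyAux in
/-- Let `q, r, k` be positive integers, `B = q(r-1)+k`,
`g = gcd(q·r,k)`, `ρ = q·r/g`, `κ = k/g`, and let `X̂, Ŷ ∈ ℚ⟦z⟧` be the rational
parametrisation above.  Then (i) `X̂^{(q-1)·κ} = Ŷ^κ·(1-(k/r)·Ŷ^{r-1}·X̂^{r-1+k})^{ρ+κ}`
holds in `ℚ⟦z⟧`; and (ii) `Ŷ` equals the substitution `Y(X̂)` of `X̂` into the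
unique power series `Y ∈ ℚ⟦X⟧` supported in degrees `≥ q-1`, with coefficient `1`
in degree `q-1`, satisfying `X^{(q-1)·κ} = Y^κ(1-(k/r)Y^{r-1}X^{r-1+k})^{ρ+κ}`. -/
theorem leaky_spectral_curve_parametrisation
    (q r k : ℕ) (hq : 0 < q) (hr : 0 < r) (hk : 0 < k)
    (g ρ κ : ℕ) (hg : g = Nat.gcd (q * r) k) (hρ : ρ = q * r / g) (hκ : κ = k / g) :
    ((Xhat q r k) ^ ((q - 1) * κ) =
      (Yhat q r k) ^ κ *
        (1 - PowerSeries.C ((k : ℚ) / r) * (Yhat q r k) ^ (r - 1) *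
            (Xhat q r k) ^ (r - 1 + k)) ^ (ρ + κ)) ∧
    (∀ Y : PowerSeries ℚ,
      (∀ n : ℕ, n < q - 1 → PowerSeries.coeff n Y = 0) →
      PowerSeries.coeff (q - 1) Y = 1 →
      (PowerSeries.X : PowerSeries ℚ) ^ ((q - 1) * κ) =
        Y ^ κ *
          (1 - PowerSeries.C ((k : ℚ) / r) * Y ^ (r - 1) *
              PowerSeries.X ^ (r - 1 + k)) ^ (ρ + κ) →
      Yhat q r k = psComp Y (Xhat q r k)) := by
  -- basic numeric facts
  have hk0 : (k : ℚ) ≠ 0 := Nat.cast_ne_zero.mpr (by omega)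
  have hr0 : (r : ℚ) ≠ 0 := Nat.cast_ne_zero.mpr (by omega)
  have hgpos : 0 < g := hg ▸ Nat.gcd_pos_of_pos_right _ hk
  have hgκ : κ * g = k := by
    rw [hκ]
    exact Nat.div_mul_cancel (hg ▸ Nat.gcd_dvd_right (q * r) k)
  have hgρ : ρ * g = q * r := by
    rw [hρ]
    exact Nat.div_mul_cancel (hg ▸ Nat.gcd_dvd_left (q * r) k)
  have hκpos : 0 < κ := by
    rcases Nat.eq_zero_or_pos κ with h | h
    · subst h; simp at hgκ; omega
    · exact h
  have hg0 : (g : ℚ) ≠ 0 := Nat.cast_ne_zero.mpr (by omega)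
  have hκQ : (κ : ℚ) * g = k := by exact_mod_cast hgκ
  have hρQ : (ρ : ℚ) * g = q * r := by exact_mod_cast hgρ
  have hkey : (ρ : ℚ) * k = q * κ * r := by
    calc (ρ : ℚ) * k = ρ * (κ * g) := by rw [hκQ]
      _ = (ρ * g) * κ := by ring
      _ = (q * r) * κ := by rw [hρQ]
      _ = q * κ * r := by ring
  -- the series u
  set u : PowerSeries ℚ := PowerSeries.C ((k : ℚ) / r) * PowerSeries.X ^ (q * (r - 1) + k)
    with hu_def
  have hu : PowerSeries.constantCoeff u = 0 := by
    rw [hu_def, map_mul, map_pow, PowerSeries.constantCoeff_X,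
      zero_pow (by omega : q * (r - 1) + k ≠ 0), mul_zero]
  set a : ℚ := -(r : ℚ) / k with ha_def
  set b : ℚ := ((r : ℚ) + k) / k with hb_def
  have hXhat : Xhat q r k = PowerSeries.X * binomPow a u := rfl
  have hYhat : Yhat q r k = PowerSeries.X ^ (q - 1) * binomPow b u := rfl
  have hXp : ∀ m : ℕ, (Xhat q r k) ^ m = PowerSeries.X ^ m * binomPow (m * a) u := by
    intro m
    rw [hXhat, mul_pow, binomPow_pow hu]
  have hYp : ∀ m : ℕ, (Yhat q r k) ^ m =
      PowerSeries.X ^ ((q - 1) * m) * binomPow (m * b) u := by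
    intro m
    rw [hYhat, mul_pow, ← pow_mul, binomPow_pow hu]
  -- key exponent computations
  have hq1 : ((q - 1 : ℕ) : ℚ) = (q : ℚ) - 1 := by
    rw [Nat.cast_sub (by omega : 1 ≤ q)]; norm_num
  have hr1 : ((r - 1 : ℕ) : ℚ) = (r : ℚ) - 1 := by
    rw [Nat.cast_sub (by omega : 1 ≤ r)]; norm_num
  have hexpX : (q - 1) * (r - 1) + (r - 1 + k) = q * (r - 1) + k := by
    obtain ⟨q', rfl⟩ : ∃ q', q = q' + 1 := ⟨q - 1, by omega⟩
    simp only [Nat.add_sub_cancel]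
    ring
  have hexpQ : ((r - 1 + k : ℕ) : ℚ) * a + ((r - 1 : ℕ) : ℚ) * b = -1 := by
    push_cast [hr1]
    rw [ha_def, hb_def]
    field_simp
    ring
  have hE : PowerSeries.C ((k : ℚ) / r) * (Yhat q r k) ^ (r - 1) *
      (Xhat q r k) ^ (r - 1 + k) = u * binomPow (-1) u := by
    rw [hYp (r - 1), hXp (r - 1 + k)]
    calc PowerSeries.C ((k : ℚ) / r) *
          (PowerSeries.X ^ ((q - 1) * (r - 1)) * binomPow (((r - 1 : ℕ) : ℚ) * b) u) *
          (PowerSeries.X ^ (r - 1 + k) * binomPow (((r - 1 + k : ℕ) : ℚ) * a) u) =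
        (PowerSeries.C ((k : ℚ) / r) * PowerSeries.X ^ ((q - 1) * (r - 1) + (r - 1 + k))) *
          (binomPow (((r - 1 + k : ℕ) : ℚ) * a) u * binomPow (((r - 1 : ℕ) : ℚ) * b) u) := by
          rw [pow_add]; ring
      _ = u * binomPow (-1) u := by
          rw [hexpX, binomPow_add hu, hexpQ, ← hu_def]
  have hOne : (1 : PowerSeries ℚ) - PowerSeries.C ((k : ℚ) / r) * (Yhat q r k) ^ (r - 1) *
      (Xhat q r k) ^ (r - 1 + k) = binomPow (-1) u := by
    rw [hE]
    exact one_sub_mul_binomPow_neg_one hu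
  have hexp2 : (((q - 1) * κ : ℕ) : ℚ) * a = ((κ : ℕ) : ℚ) * b + (((ρ + κ : ℕ) : ℚ)) * (-1) := by
    push_cast [hq1]
    rw [ha_def, hb_def]
    field_simp
    linear_combination hkey
  have parti : (Xhat q r k) ^ ((q - 1) * κ) =
      (Yhat q r k) ^ κ *
        (1 - PowerSeries.C ((k : ℚ) / r) * (Yhat q r k) ^ (r - 1) *
            (Xhat q r k) ^ (r - 1 + k)) ^ (ρ + κ) := by
    rw [hOne, hXp ((q - 1) * κ), hYp κ, binomPow_pow hu (-1) (ρ + κ), hexp2,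
      ← binomPow_add hu]
    ring
  refine ⟨parti, ?_⟩
  intro Y hYlt hYeq1 hYfun
  have hX0 : PowerSeries.constantCoeff (Xhat q r k) = 0 := by
    rw [hXhat, map_mul, PowerSeries.constantCoeff_X, zero_mul]
  set W := psComp Y (Xhat q r k) with hW_def
  -- substitute Xhat into the functional equation for Y
  have hsub := congrArg (fun f => psComp f (Xhat q r k)) hYfun
  simp only [psComp_mul hX0, psComp_pow hX0, psComp_sub, psComp_one, psComp_C,
    psComp_X hX0, ← hW_def] at hsub
  -- hsub : Xhat^((q-1)κ) = W^κ * (1 - C c * W^(r-1) * Xhat^(r-1+k))^(ρ+κ)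
  have hXdvd1 : (PowerSeries.X : PowerSeries ℚ) ^ 1 ∣ Xhat q r k := by
    rw [pow_one, hXhat]
    exact dvd_mul_right _ _
  have hA : (PowerSeries.X : PowerSeries ℚ) ∣ (Xhat q r k) ^ (r - 1 + k) := by
    exact dvd_pow (by simpa using hXdvd1) (by omega)
  have hbp0 : (PowerSeries.X : PowerSeries ℚ) ^ 0 ∣ binomPow a u := by
    rw [pow_zero]; exact one_dvd _
  have hbp0' : (PowerSeries.X : PowerSeries ℚ) ^ 0 ∣ binomPow b u := by
    rw [pow_zero]; exact one_dvd _
  have hcoeff1X : PowerSeries.coeff 1 (Xhat q r k) = 1 := by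
    have h1 : (PowerSeries.X : PowerSeries ℚ) ^ 1 ∣ (PowerSeries.X : PowerSeries ℚ) := by
      rw [pow_one]
    have h := coeff_mul_exact h1 hbp0
    rw [hXhat]
    simpa [PowerSeries.coeff_zero_eq_constantCoeff, constantCoeff_binomPow hu,
      PowerSeries.coeff_one_X] using h
  have hYhdvd : (PowerSeries.X : PowerSeries ℚ) ^ (q - 1) ∣ Yhat q r k := by
    rw [hYhat]
    exact dvd_mul_right _ _
  have hYhlt : ∀ m, m < q - 1 → PowerSeries.coeff m (Yhat q r k) = 0 :=
    PowerSeries.X_pow_dvd_iff.mp hYhdvd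
  have hYheq : PowerSeries.coeff (q - 1) (Yhat q r k) = 1 := by
    have h := coeff_mul_exact (dvd_refl ((PowerSeries.X : PowerSeries ℚ) ^ (q - 1))) hbp0'
    rw [hYhat]
    simpa [PowerSeries.coeff_zero_eq_constantCoeff, constantCoeff_binomPow hu,
      PowerSeries.coeff_X_pow] using h
  have hcoeffXpow : PowerSeries.coeff (q - 1) ((Xhat q r k) ^ (q - 1)) = 1 := by
    have h := coeff_pow_exact hXdvd1 (q - 1)
    rw [one_mul] at h
    rw [h, hcoeff1X, one_pow]
  have hWlt : ∀ m, m < q - 1 → PowerSeries.coeff m W = 0 := by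
    intro m hm
    rw [hW_def, psComp, PowerSeries.coeff_mk]
    apply Finset.sum_eq_zero
    intro n hn
    rw [hYlt n (by have := Finset.mem_range.mp hn; omega), zero_mul]
  have hWeq : PowerSeries.coeff (q - 1) W = 1 := by
    rw [hW_def, psComp, PowerSeries.coeff_mk, Finset.sum_eq_single (q - 1)]
    · rw [hYeq1, one_mul, hcoeffXpow]
    · intro n hn hne
      have hn' := Finset.mem_range.mp hn
      rw [hYlt n (by omega), zero_mul]
    · intro h
      exact absurd (Finset.mem_range.mpr (by omega)) h
  exact uniq q κ (ρ + κ) (r - 1) hq hκpos ((k : ℚ) / r) ((Xhat q r k) ^ (r - 1 + k)) hA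
    (Yhat q r k) W hYhlt hYheq hWlt hWeq (parti.symm.trans hsub)
end

section
/- Let R be a commutative ring, k ≥ 1 an integer, and f = Σ_{n≥0} f_n X^n ∈ R⟦X⟧, with the convention f_n = 0 for n < 0. Then in the ring of formal power series in two variables X₁, X₂ over R: (X₂ - X₁) · Σ_{l,m ≥ 1} f_{l+m-k} · X₁^l X₂^m = X₁·X₂·( X₂^{k-1}·f(X₂) - X₁^{k-1}·f(X₁) ), where f(X_i) denotes the substitution of the variable X_i into f. -/
open Finset

/-- Build a formal power series in two variables from its coefficient function. -/
def mvMk {R : Type*} [CommRing R] (f : (Fin 2 →₀ ℕ) → R) : MvPowerSeries (Fin 2) R := f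

/-- The two-variable power series `Σ_{l,m ≥ 1} f_{l+m-k} · X₁^l X₂^m`, with the
convention that `f_n = 0` for `n < 0`. -/
noncomputable def doubleSum (R : Type*) [CommRing R] (k : ℕ) (f : PowerSeries R) :
    MvPowerSeries (Fin 2) R :=
  mvMk fun e =>
    if 1 ≤ e 0 ∧ 1 ≤ e 1 ∧ k ≤ e 0 + e 1 then
      PowerSeries.coeff (e 0 + e 1 - k) f
    else 0

/-- The substitution `f(Xᵢ)` of the variable `Xᵢ` into the one-variable power
series `f`, as a two-variable power series. -/
noncomputable def onVar (R : Type*) [CommRing R] (i : Fin 2) (f : PowerSeries R) :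
    MvPowerSeries (Fin 2) R :=
  mvMk fun e =>
    if e = Finsupp.single i (e i) then PowerSeries.coeff (e i) f else 0

private lemma le2 (s e : Fin 2 →₀ ℕ) : s ≤ e ↔ s 0 ≤ e 0 ∧ s 1 ≤ e 1 := by
  rw [Finsupp.le_def, Fin.forall_fin_two]

private lemma eq_single1 (e : Fin 2 →₀ ℕ) : e = Finsupp.single 1 (e 1) ↔ e 0 = 0 := by
  rw [Finsupp.ext_iff, Fin.forall_fin_two]; simp

private lemma eq_single0 (e : Fin 2 →₀ ℕ) : e = Finsupp.single 0 (e 0) ↔ e 1 = 0 := by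
  rw [Finsupp.ext_iff, Fin.forall_fin_two]; simp

private lemma key {R : Type*} [CommRing R] (g : ℕ → R) (k a b : ℕ) (hk : 1 ≤ k) :
    ((if 1 ≤ b then
        if 1 ≤ a ∧ 1 ≤ b - 1 ∧ k ≤ a + (b - 1) then g (a + (b - 1) - k) else 0
      else 0) -
      if 1 ≤ a then
        if 1 ≤ a - 1 ∧ 1 ≤ b ∧ k ≤ a - 1 + b then g (a - 1 + b - k) else 0
      else 0) =
    (if 1 ≤ a ∧ k ≤ b then if a - 1 = 0 then g (b - k) else 0 else 0) -
      if k ≤ a ∧ 1 ≤ b then if b - 1 = 0 then g (a - k) else 0 else 0 := by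
  split_ifs <;>
    first
      | rfl
      | omega
      | (congr 1; omega)
      | (simp only [sub_self, sub_zero, zero_sub, neg_inj]; first | rfl | omega | (congr 1; omega))
      | (have h : b - k = a - k := by omega
         rw [h, sub_self, sub_self])
      | (have h2 : a + (b - 1) - k = a - 1 + b - k := by omega
         rw [h2, sub_self]; simp)

/-- Let `R` be a commutative ring, `k ≥ 1` an integer, and
`f = Σ_{n≥0} f_n X^n ∈ R⟦X⟧`, with the convention `f_n = 0` for `n < 0`.  Then
in the ring of formal power series in two variables `X₁, X₂` over `R`:
`(X₂ - X₁) · Σ_{l,m ≥ 1} f_{l+m-k} · X₁^l X₂^m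
  = X₁·X₂·( X₂^{k-1}·f(X₂) - X₁^{k-1}·f(X₁) )`. -/
theorem two_variable_generating_function_lemma
    (R : Type*) [CommRing R] (k : ℕ) (hk : 1 ≤ k) (f : PowerSeries R) :
    (MvPowerSeries.X 1 - MvPowerSeries.X 0) * doubleSum R k f =
      MvPowerSeries.X 0 * MvPowerSeries.X 1 *
        ((MvPowerSeries.X 1) ^ (k - 1) * onVar R 1 f -
          (MvPowerSeries.X 0) ^ (k - 1) * onVar R 0 f) := by
  have hXmon : ∀ (i : Fin 2) (n : ℕ), (MvPowerSeries.X i : MvPowerSeries (Fin 2) R) ^ n =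
      MvPowerSeries.monomial (Finsupp.single i n) 1 := fun i n => MvPowerSeries.X_pow_eq i n
  have hX : ∀ i : Fin 2, (MvPowerSeries.X i : MvPowerSeries (Fin 2) R) =
      MvPowerSeries.monomial (Finsupp.single i 1) 1 := fun i => rfl
  have hrhs : MvPowerSeries.X 0 * MvPowerSeries.X 1 *
        ((MvPowerSeries.X 1) ^ (k - 1) * onVar R 1 f -
          (MvPowerSeries.X 0) ^ (k - 1) * onVar R 0 f) =
      MvPowerSeries.monomial (Finsupp.single 0 1 + Finsupp.single 1 k) 1 * onVar R 1 f -
      MvPowerSeries.monomial (Finsupp.single 0 k + Finsupp.single 1 1) 1 * onVar R 0 f := by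
    rw [mul_sub]
    congr 1
    · rw [show MvPowerSeries.X 0 * MvPowerSeries.X 1 *
          ((MvPowerSeries.X (R := R) 1) ^ (k - 1) * onVar R 1 f) =
          (MvPowerSeries.X 0 * (MvPowerSeries.X 1 * (MvPowerSeries.X 1) ^ (k - 1))) * onVar R 1 f
          by ring, ← pow_succ', Nat.sub_add_cancel hk, hXmon, hX 0,
        MvPowerSeries.monomial_mul_monomial, one_mul]
    · rw [show MvPowerSeries.X 0 * MvPowerSeries.X 1 *
          ((MvPowerSeries.X (R := R) 0) ^ (k - 1) * onVar R 0 f) =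
          ((MvPowerSeries.X 0 * (MvPowerSeries.X 0) ^ (k - 1)) * MvPowerSeries.X 1) * onVar R 0 f
          by ring, ← pow_succ', Nat.sub_add_cancel hk, hXmon, hX 1,
        MvPowerSeries.monomial_mul_monomial, one_mul]
  rw [hrhs, sub_mul, hX 0, hX 1]
  ext e
  rw [map_sub, map_sub, MvPowerSeries.coeff_monomial_mul, MvPowerSeries.coeff_monomial_mul,
    MvPowerSeries.coeff_monomial_mul, MvPowerSeries.coeff_monomial_mul]
  simp only [one_mul, le2, Finsupp.single_apply, Finsupp.add_apply, Finsupp.tsub_apply]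
  norm_num
  have hc1 : ∀ s : Fin 2 →₀ ℕ, MvPowerSeries.coeff s (doubleSum R k f) =
      if 1 ≤ s 0 ∧ 1 ≤ s 1 ∧ k ≤ s 0 + s 1 then PowerSeries.coeff (s 0 + s 1 - k) f else 0 :=
    fun s => rfl
  have hc2 : ∀ s : Fin 2 →₀ ℕ, MvPowerSeries.coeff s (onVar R 1 f) =
      if s 0 = 0 then PowerSeries.coeff (s 1) f else 0 := by
    intro s
    exact if_congr (eq_single1 s) rfl rfl
  have hc3 : ∀ s : Fin 2 →₀ ℕ, MvPowerSeries.coeff s (onVar R 0 f) =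
      if s 1 = 0 then PowerSeries.coeff (s 0) f else 0 := by
    intro s
    exact if_congr (eq_single0 s) rfl rfl
  rw [hc1, hc1, hc2, hc3]
  simp only [Finsupp.tsub_apply, Finsupp.single_apply, Finsupp.add_apply]
  norm_num
  exact key (fun n => PowerSeries.coeff n f) k (e 0) (e 1) hk
end

section
/- Let A be a commutative ℚ-algebra, u : A → A an arbitrary function, and k, m ∈ A. For n ∈ ℕ and s ∈ A define φ_n(s) = Σ_{i=0}^n ((-1)^{n-i}/(i!·(n-i)!)) · ∏_{j=0}^{i-1} u(s + (m + (2j+1-n)·k)/2) · ∏_{j=i}^{n-1} u(s + (-m + (2j+1-n)·k)/2). Then φ_0(s) = 1 for all s, and for all n ∈ ℕ and s ∈ A: (n+1)·φ_{n+1}(s) = u(s + (m - n·k)/2)·φ_n(s + k/2) - u(s - (m - n·k)/2)·φ_n(s - k/2). -/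
open Finset

section Aux

variable {A : Type*} [CommRing A] [Algebra ℚ A]

private lemma natCast_mul_smul' (n : ℕ) (r : ℚ) (x : A) :
    ((n : ℕ) : A) * (r • x) = ((n : ℚ) * r) • x := by
  rw [mul_smul_comm, show ((n : ℕ) : A) * x = ((n : ℚ)) • x by
    rw [Nat.cast_smul_eq_nsmul, nsmul_eq_mul], smul_smul, mul_comm]

private lemma prodP_up (u : A → A) (k m : A) (n i : ℕ) (s : A) :
    u (s + ((1:ℚ)/2) • (m - (n:ℚ) • k)) *
      ∏ j ∈ range i, u ((s + ((1:ℚ)/2) • k) + ((1:ℚ)/2) • (m + (2*(j:ℚ)+1-(n:ℚ)) • k))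
    = ∏ j ∈ range (i+1), u (s + ((1:ℚ)/2) • (m + (2*(j:ℚ) - (n:ℚ)) • k)) := by
  rw [Finset.prod_range_succ']
  rw [show s + ((1:ℚ)/2) • (m + (2*((0:ℕ):ℚ) - (n:ℚ)) • k)
      = s + ((1:ℚ)/2) • (m - (n:ℚ) • k) by push_cast; module]
  rw [mul_comm]
  congr 1
  refine Finset.prod_congr rfl fun j _ => ?_
  congr 1
  push_cast; module

private lemma prodQ_up (u : A → A) (k m : A) (n i : ℕ) (s : A) :
    ∏ j ∈ Ico i n, u ((s + ((1:ℚ)/2) • k) + ((1:ℚ)/2) • (-m + (2*(j:ℚ)+1-(n:ℚ)) • k))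
    = ∏ j ∈ Ico (i+1) (n+1), u (s + ((1:ℚ)/2) • (-m + (2*(j:ℚ) - (n:ℚ)) • k)) := by
  rw [Finset.prod_Ico_eq_prod_range, Finset.prod_Ico_eq_prod_range,
    show n + 1 - (i + 1) = n - i by omega]
  refine Finset.prod_congr rfl fun t _ => ?_
  congr 1
  push_cast; module

private lemma prodP_down (u : A → A) (k m : A) (n i : ℕ) (s : A) :
    ∏ j ∈ range i, u ((s - ((1:ℚ)/2) • k) + ((1:ℚ)/2) • (m + (2*(j:ℚ)+1-(n:ℚ)) • k))
    = ∏ j ∈ range i, u (s + ((1:ℚ)/2) • (m + (2*(j:ℚ) - (n:ℚ)) • k)) := by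
  refine Finset.prod_congr rfl fun j _ => ?_
  congr 1
  module

private lemma prodQ_down (u : A → A) (k m : A) (n i : ℕ) (s : A) (hin : i ≤ n) :
    u (s - ((1:ℚ)/2) • (m - (n:ℚ) • k)) *
      ∏ j ∈ Ico i n, u ((s - ((1:ℚ)/2) • k) + ((1:ℚ)/2) • (-m + (2*(j:ℚ)+1-(n:ℚ)) • k))
    = ∏ j ∈ Ico i (n+1), u (s + ((1:ℚ)/2) • (-m + (2*(j:ℚ) - (n:ℚ)) • k)) := by
  rw [Finset.prod_Ico_succ_top hin]
  rw [show s + ((1:ℚ)/2) • (-m + (2*(n:ℚ) - (n:ℚ)) • k)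
      = s - ((1:ℚ)/2) • (m - (n:ℚ) • k) by module]
  rw [mul_comm]
  congr 1
  refine Finset.prod_congr rfl fun j _ => ?_
  congr 1
  module

private lemma coeff_mid (n i : ℕ) (h : i < n) :
    ((n:ℚ)+1) * ((-1)^(n+1-(i+1)) / ((i+1).factorial * (n+1-(i+1)).factorial))
      = (-1)^(n-i) / (i.factorial * (n-i).factorial)
        - (-1)^(n-(i+1)) / ((i+1).factorial * (n-(i+1)).factorial) := by
  obtain ⟨d, rfl⟩ : ∃ d, n = i + d + 1 := ⟨n - i - 1, by omega⟩
  rw [show i + d + 1 + 1 - (i+1) = d + 1 by omega,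
    show i + d + 1 - i = d + 1 by omega,
    show i + d + 1 - (i+1) = d by omega]
  have hi : ((i.factorial : ℚ)) ≠ 0 := by exact_mod_cast i.factorial_ne_zero
  have hd : ((d.factorial : ℚ)) ≠ 0 := by exact_mod_cast d.factorial_ne_zero
  rw [Nat.factorial_succ i, Nat.factorial_succ d, pow_succ]
  push_cast
  field_simp
  ring

private lemma coeff_top (n : ℕ) :
    ((n:ℚ)+1) * ((-1)^(n+1-(n+1)) / ((n+1).factorial * (n+1-(n+1)).factorial))
      = (-1)^(n-n) / (n.factorial * (n-n).factorial) := by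
  simp only [Nat.sub_self, pow_zero, Nat.factorial_zero, Nat.factorial_succ]
  have hn : ((n.factorial : ℚ)) ≠ 0 := by exact_mod_cast n.factorial_ne_zero
  push_cast
  field_simp

private lemma coeff_bot (n : ℕ) :
    ((n:ℚ)+1) * ((-1)^(n+1-0) / ((0).factorial * (n+1-0).factorial))
      = -((-1)^(n-0) / ((0).factorial * (n-0).factorial)) := by
  simp only [Nat.sub_zero, Nat.factorial_zero, Nat.factorial_succ, pow_succ]
  have hn : ((n.factorial : ℚ)) ≠ 0 := by exact_mod_cast n.factorial_ne_zero
  push_cast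
  field_simp

private lemma abel_helper {M : Type*} [AddCommGroup M] (S1 S2 x y : M) :
    S1 - S2 + -x + y = S1 + y - (S2 + x) := by abel

end Aux

set_option maxHeartbeats 1000000 in
/-- Let `A` be a commutative `ℚ`-algebra, `u : A → A` an
arbitrary function, and `k, m ∈ A`.  For `n ∈ ℕ` and `s ∈ A` define
`φ_n(s) = Σ_{i=0}^n ((-1)^{n-i}/(i!·(n-i)!)) · ∏_{j=0}^{i-1} u(s + (m + (2j+1-n)·k)/2)
· ∏_{j=i}^{n-1} u(s + (-m + (2j+1-n)·k)/2)`.  Then `φ_0(s) = 1` for all `s`, and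
for all `n ∈ ℕ` and `s ∈ A`:
`(n+1)·φ_{n+1}(s) = u(s + (m - n·k)/2)·φ_n(s + k/2) - u(s - (m - n·k)/2)·φ_n(s - k/2)`. -/
theorem conjugated_current_closed_form
    (A : Type*) [CommRing A] [Algebra ℚ A] (u : A → A) (k m : A)
    (φ : ℕ → A → A)
    (hφ : ∀ (n : ℕ) (s : A), φ n s =
      ∑ i ∈ Finset.range (n + 1),
        (((-1 : ℚ) ^ (n - i) / (Nat.factorial i * Nat.factorial (n - i))) •
          ((∏ j ∈ Finset.range i,
              u (s + ((1 : ℚ) / 2) • (m + (2 * (j : ℚ) + 1 - (n : ℚ)) • k))) *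
           (∏ j ∈ Finset.Ico i n,
              u (s + ((1 : ℚ) / 2) • (-m + (2 * (j : ℚ) + 1 - (n : ℚ)) • k)))))) :
    (∀ s : A, φ 0 s = 1) ∧
    (∀ (n : ℕ) (s : A),
      ((n + 1 : ℕ) : A) * φ (n + 1) s =
        u (s + ((1 : ℚ) / 2) • (m - (n : ℚ) • k)) * φ n (s + ((1 : ℚ) / 2) • k) -
          u (s - ((1 : ℚ) / 2) • (m - (n : ℚ) • k)) * φ n (s - ((1 : ℚ) / 2) • k)) := by
  constructor
  · intro s
    rw [hφ]
    simp
  · intro n s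
    -- canonical building block
    set F : ℕ → A := fun i =>
      (∏ j ∈ range i, u (s + ((1:ℚ)/2) • (m + (2*(j:ℚ) - (n:ℚ)) • k))) *
      (∏ j ∈ Ico i (n+1), u (s + ((1:ℚ)/2) • (-m + (2*(j:ℚ) - (n:ℚ)) • k))) with hF
    have hcast : ∀ j : ℕ, (2*(j:ℚ)+1-((n+1:ℕ):ℚ)) = 2*(j:ℚ) - (n:ℚ) := by
      intro j; push_cast; ring
    have hL : ((n + 1 : ℕ) : A) * φ (n + 1) s
        = ∑ i ∈ range (n+2),
            (((n:ℚ)+1) * ((-1:ℚ)^(n+1-i) / (Nat.factorial i * Nat.factorial (n+1-i)))) • F i := by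
      rw [hφ, Finset.mul_sum]
      refine Finset.sum_congr rfl fun i hi => ?_
      simp only [hcast]
      rw [natCast_mul_smul', show ((n+1:ℕ):ℚ) = (n:ℚ)+1 by push_cast; ring]
    have hR1 : u (s + ((1 : ℚ) / 2) • (m - (n : ℚ) • k)) * φ n (s + ((1 : ℚ) / 2) • k)
        = ∑ i ∈ range (n+1),
            ((-1:ℚ)^(n-i) / (Nat.factorial i * Nat.factorial (n-i))) • F (i+1) := by
      rw [hφ, Finset.mul_sum]
      refine Finset.sum_congr rfl fun i hi => ?_
      rw [mul_smul_comm]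
      congr 1
      rw [hF, ← mul_assoc, prodP_up, prodQ_up]
    have hR2 : u (s - ((1 : ℚ) / 2) • (m - (n : ℚ) • k)) * φ n (s - ((1 : ℚ) / 2) • k)
        = ∑ i ∈ range (n+1),
            ((-1:ℚ)^(n-i) / (Nat.factorial i * Nat.factorial (n-i))) • F i := by
      rw [hφ, Finset.mul_sum]
      refine Finset.sum_congr rfl fun i hi => ?_
      rw [mul_smul_comm]
      congr 1
      rw [hF, mul_left_comm, prodQ_down u k m n i s (by simpa using Nat.lt_succ_iff.mp (mem_range.mp hi)),
        prodP_down]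
    rw [hL, hR1, hR2]
    rw [show n + 2 = (n+1) + 1 from rfl, Finset.sum_range_succ, Finset.sum_range_succ']
    rw [Finset.sum_range_succ
      (f := fun i => ((-1:ℚ)^(n-i) / (Nat.factorial i * Nat.factorial (n-i))) • F (i+1))]
    rw [Finset.sum_range_succ'
      (f := fun i => ((-1:ℚ)^(n-i) / (Nat.factorial i * Nat.factorial (n-i))) • F i)]
    have hmid : ∀ i ∈ range n,
        (((n:ℚ)+1) * ((-1:ℚ)^(n+1-(i+1)) / (Nat.factorial (i+1) * Nat.factorial (n+1-(i+1))))) • F (i+1)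
          = ((-1:ℚ)^(n-i) / (Nat.factorial i * Nat.factorial (n-i))) • F (i+1)
            - ((-1:ℚ)^(n-(i+1)) / (Nat.factorial (i+1) * Nat.factorial (n-(i+1)))) • F (i+1) := by
      intro i hi
      rw [← sub_smul, coeff_mid n i (mem_range.mp hi)]
    rw [Finset.sum_congr rfl hmid, Finset.sum_sub_distrib, coeff_top n, coeff_bot n]
    rw [neg_smul]
    exact abel_helper _ _ _ _
end

section
/- Let k be a positive integer, w : ℝ → ℝ a differentiable function, and fix z > 0 and s ∈ ℝ with w(s) > 0. Define S(β) = s + k·z^k·β·w(s) for β ∈ ℝ, and let J ⊆ ℝ be an open interval containing 0 such that w(S(β)) > 0 for all β ∈ J; define Z(β) = z·(w(s)/w(S(β)))^{1/k} for β ∈ J (real power). Then for all β ∈ J: Z(β) > 0; S is differentiable with S'(β) = k·Z(β)^k·w(S(β)); Z is differentiable with Z'(β) = -Z(β)^{k+1}·w'(S(β)); Z(0) = z and S(0) = s; and the Hamiltonian is conserved: Z(β)^k·w(S(β)) = z^k·w(s). In other words, β ↦ (Z(β), S(β)) is the integral curve through (z,s) of the Hamiltonian vector field of 𝔴(z,s)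 = z^k·w(s) with respect to the symplectic form (dz/z)∧ds on ℝ_{>0}×ℝ. -/
open Set

/-- Let `k` be a positive integer, `w : ℝ → ℝ` a
differentiable function, and fix `z > 0` and `s ∈ ℝ` with `w s > 0`.  Define
`S β = s + k·z^k·β·w s`, and let `J = (a,b)` be an open interval containing `0`
such that `w (S β) > 0` on `J`; define `Z β = z·(w s / w (S β))^{1/k}` on `J`
(real power).  Then `Z 0 = z`, `S 0 = s`, and for all `β ∈ J`: `Z β > 0`, `S`
has derivative `k·Z(β)^k·w(S β)` at `β`, `Z` has derivative
`-Z(β)^{k+1}·w'(S β)` at `β`, and the Hamiltonian is conserved: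
`Z(β)^k·w(S β) = z^k·w s`.  (I.e. `β ↦ (Z β, S β)` is the integral curve
through `(z,s)` of the Hamiltonian vector field of `𝔴(z,s) = z^k·w(s)` for the
symplectic form `(dz/z)∧ds` on `ℝ_{>0}×ℝ`.) -/
theorem hamiltonian_flow_integral_curve
    (k : ℕ) (hk : 0 < k) (w : ℝ → ℝ) (hw : Differentiable ℝ w)
    (z s : ℝ) (hz : 0 < z) (hws : 0 < w s)
    (S : ℝ → ℝ) (hS : ∀ β : ℝ, S β = s + k * z ^ k * β * w s)
    (a b : ℝ) (h0J : (0 : ℝ) ∈ Set.Ioo a b)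
    (hJpos : ∀ β ∈ Set.Ioo a b, 0 < w (S β))
    (Z : ℝ → ℝ) (hZ : ∀ β ∈ Set.Ioo a b, Z β = z * (w s / w (S β)) ^ ((1 : ℝ) / k)) :
    Z 0 = z ∧ S 0 = s ∧
    ∀ β ∈ Set.Ioo a b,
      0 < Z β ∧
      HasDerivAt S (k * Z β ^ k * w (S β)) β ∧
      HasDerivAt Z (-(Z β ^ (k + 1)) * deriv w (S β)) β ∧
      Z β ^ k * w (S β) = z ^ k * w s := by

  have hk0 : (k:ℝ) ≠ 0 := Nat.cast_ne_zero.mpr hk.ne'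
  have hS0 : S 0 = s := by rw [hS 0]; ring
  have hZ0 : Z 0 = z := by
    rw [hZ 0 h0J, hS0, div_self hws.ne', Real.one_rpow, mul_one]
  refine ⟨hZ0, hS0, ?_⟩
  intro β hβ
  set c : ℝ := k * z ^ k * w s with hc
  have hd : 0 < w (S β) := hJpos β hβ
  have hZβ : Z β = z * (w s / w (S β)) ^ ((1:ℝ)/k) := hZ β hβ
  have hratio : 0 < w s / w (S β) := div_pos hws hd
  have hZpos : 0 < Z β := by
    rw [hZβ]; exact mul_pos hz (Real.rpow_pos_of_pos hratio _)
  have hZk : Z β ^ k = z ^ k * (w s / w (S β)) := by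
    rw [hZβ, mul_pow, ← Real.rpow_natCast ((w s / w (S β)) ^ ((1:ℝ)/k)) k,
      ← Real.rpow_mul hratio.le, one_div, inv_mul_cancel₀ hk0, Real.rpow_one]
  have hcons : Z β ^ k * w (S β) = z ^ k * w s := by
    rw [hZk]; field_simp
  have hSfun : S = fun β => s + c * β := funext fun β => by rw [hS β, hc]; ring
  have hSder : HasDerivAt S c β := by
    rw [hSfun]; simpa using ((hasDerivAt_id β).const_mul c).const_add s
  have hSder' : HasDerivAt S (k * Z β ^ k * w (S β)) β := by
    convert hSder using 1
    rw [mul_assoc, hcons, hc]; ring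
  refine ⟨hZpos, hSder', ?_, hcons⟩
  have hwS : HasDerivAt (fun β => w (S β)) (deriv w (S β) * c) β :=
    (hw (S β)).hasDerivAt.comp β hSder
  have hdiv : HasDerivAt (fun β => w s / w (S β))
      ((0 * w (S β) - w s * (deriv w (S β) * c)) / (w (S β)) ^ 2) β :=
    (hasDerivAt_const β (w s)).div hwS hd.ne'
  have hrpow : HasDerivAt (fun β => (w s / w (S β)) ^ ((1:ℝ)/k))
      (((0 * w (S β) - w s * (deriv w (S β) * c)) / (w (S β)) ^ 2) * ((1:ℝ)/k)
        * (w s / w (S β)) ^ ((1:ℝ)/k - 1)) β :=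
    hdiv.rpow_const (Or.inl hratio.ne')
  have hg := hrpow.const_mul z
  have hev : Z =ᶠ[nhds β] fun β => z * (w s / w (S β)) ^ ((1:ℝ)/k) := by
    filter_upwards [isOpen_Ioo.mem_nhds hβ] with x hx using hZ x hx
  have hZder := hg.congr_of_eventuallyEq hev
  convert hZder using 1
  · rfl
  · rfl
  have h1 : ((w s / w (S β)) ^ ((1:ℝ)/k)) ^ (k+1)
      = (w s / w (S β)) ^ ((1:ℝ)/k - 1) * (w s / w (S β)) ^ 2 := by
    rw [← Real.rpow_natCast ((w s / w (S β)) ^ ((1:ℝ)/k)) (k+1),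
      ← Real.rpow_mul hratio.le, ← Real.rpow_natCast (w s / w (S β)) 2,
      ← Real.rpow_add hratio]
    congr 1
    push_cast
    field_simp
    ring
  rw [hZβ, mul_pow, h1, hc]
  field_simp
  ring
end

section
/- Let k be a positive integer, β ∈ ℝ, and w : ℝ → ℝ a differentiable function. On the open set U of pairs (z,s) with z > 0, w(s) > 0, and w(s + k·z^k·β·w(s)) > 0, define Υ(z,s) = s + k·z^k·β·w(s) and Ξ(z,s) = z·(w(s)/w(Υ(z,s)))^{1/k} (real power). Then at every point of U: ∂_z(log Ξ)·∂_s Υ - ∂_s(log Ξ)·∂_z Υ = 1/z. Equivalently, the map (z,s) ↦ (Ξ(z,s), Υ(z,s)) pulls back the 2-form (dΞ/Ξ)∧dΥ to (dz/z)∧ds, i.e. the time-β Hamiltonian flow of 𝔴(z,s) = z^k·w(s) is a symplectomorphism onto its image for the symplectic form Ω = (dz/z)∧ds. -/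
open Real

/-- Let `k` be a positive integer, `β ∈ ℝ`, and `w : ℝ → ℝ`
a differentiable function.  On the open set `U` of pairs `(z,s)` with `z > 0`,
`w s > 0` and `w (s + k·z^k·β·w s) > 0`, define `Υ(z,s) = s + k·z^k·β·w s` and
`Ξ(z,s) = z·(w s / w (Υ(z,s)))^{1/k}` (real power).  Then at every point of
`U`: `∂_z(log Ξ)·∂_s Υ - ∂_s(log Ξ)·∂_z Υ = 1/z`, i.e. the time-`β`
Hamiltonian flow of `𝔴(z,s) = z^k·w(s)` pulls back `(dΞ/Ξ)∧dΥ` to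
`(dz/z)∧ds`: it is a symplectomorphism onto its image for the symplectic form
`Ω = (dz/z)∧ds`. -/
theorem hamiltonian_flow_is_symplectomorphism
    (k : ℕ) (hk : 0 < k) (β : ℝ) (w : ℝ → ℝ) (hw : Differentiable ℝ w)
    (Υ Ξ : ℝ → ℝ → ℝ)
    (hΥ : ∀ z s : ℝ, Υ z s = s + k * z ^ k * β * w s)
    (hΞ : ∀ z s : ℝ, Ξ z s = z * (w s / w (Υ z s)) ^ ((1 : ℝ) / k)) :
    ∀ z s : ℝ, 0 < z → 0 < w s → 0 < w (Υ z s) →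
      deriv (fun z' => Real.log (Ξ z' s)) z * deriv (fun s' => Υ z s') s -
          deriv (fun s' => Real.log (Ξ z s')) s * deriv (fun z' => Υ z' s) z =
        1 / z := by
  intro z s hz hws hwu
  obtain ⟨m, rfl⟩ : ∃ m, k = m + 1 := ⟨k - 1, (Nat.succ_pred_eq_of_pos hk).symm⟩
  set k := m + 1 with hkdef
  have hkR : ((k : ℕ) : ℝ) ≠ 0 := by positivity
  set u := Υ z s with hu
  set D := deriv w u with hD
  set d := deriv w s with hd
  -- derivative of Υ in z
  have hΥz : HasDerivAt (fun z' => Υ z' s)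
      ((k : ℝ) * ((k : ℝ) * z ^ (k - 1)) * β * w s) z := by
    simp only [hΥ]
    exact ((((hasDerivAt_pow k z).const_mul (k : ℝ)).mul_const β).mul_const (w s)).const_add s
  -- derivative of Υ in s
  have hΥs : HasDerivAt (fun s' => Υ z s')
      (1 + (k : ℝ) * z ^ k * β * d) s := by
    simp only [hΥ]
    have h1 : HasDerivAt (fun s' : ℝ => s') 1 s := hasDerivAt_id s
    have h2 : HasDerivAt (fun s' => (k : ℝ) * z ^ k * β * w s')
        ((k : ℝ) * z ^ k * β * d) s := by
      simpa [mul_comm] using (hw s).hasDerivAt.const_mul ((k : ℝ) * z ^ k * β)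
    exact h1.add h2
  -- log of Ξ in z near z
  have hcontz : Continuous (fun z' => w (Υ z' s)) := by
    simp only [hΥ]; have hwcont := hw.continuous; fun_prop
  have hevz : ∀ᶠ z' in nhds z,
      Real.log (Ξ z' s) =
        Real.log z' + (1 / (k : ℝ)) * (Real.log (w s) - Real.log (w (Υ z' s))) := by
    have h1 : ∀ᶠ z' in nhds z, 0 < w (Υ z' s) :=
      hcontz.continuousAt.eventually (eventually_gt_nhds hwu)
    have h2 : ∀ᶠ z' in nhds z, 0 < z' := eventually_gt_nhds hz
    filter_upwards [h1, h2] with z' h1 h2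
    have hdiv : 0 < w s / w (Υ z' s) := div_pos hws h1
    rw [hΞ, Real.log_mul h2.ne' (Real.rpow_pos_of_pos hdiv _).ne',
      Real.log_rpow hdiv, Real.log_div hws.ne' h1.ne']
  have hgz : HasDerivAt
      (fun z' => Real.log z' + (1 / (k : ℝ)) * (Real.log (w s) - Real.log (w (Υ z' s))))
      (z⁻¹ + (1 / (k : ℝ)) *
        (0 - (w u)⁻¹ * (D * ((k : ℝ) * ((k : ℝ) * z ^ (k - 1)) * β * w s)))) z := by
    have hwc : HasDerivAt (fun z' => w (Υ z' s))
        (D * ((k : ℝ) * ((k : ℝ) * z ^ (k - 1)) * β * w s)) z :=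
      (hw u).hasDerivAt.comp z hΥz
    have hlog : HasDerivAt (fun z' => Real.log (w (Υ z' s)))
        ((w u)⁻¹ * (D * ((k : ℝ) * ((k : ℝ) * z ^ (k - 1)) * β * w s))) z :=
      by have h := (Real.hasDerivAt_log hwu.ne').comp z hwc; exact h
    exact (Real.hasDerivAt_log hz.ne').add
      (((hasDerivAt_const z (Real.log (w s))).sub hlog).const_mul _)
  have hDz : deriv (fun z' => Real.log (Ξ z' s)) z =
      z⁻¹ + (1 / (k : ℝ)) *
        (0 - (w u)⁻¹ * (D * ((k : ℝ) * ((k : ℝ) * z ^ (k - 1)) * β * w s))) := by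
    rw [Filter.EventuallyEq.deriv_eq hevz]; exact hgz.deriv
  -- log of Ξ in s near s
  have hconts : Continuous (fun s' => w (Υ z s')) := by
    simp only [hΥ]; have hwcont := hw.continuous; fun_prop
  have hevs : ∀ᶠ s' in nhds s,
      Real.log (Ξ z s') =
        Real.log z + (1 / (k : ℝ)) * (Real.log (w s') - Real.log (w (Υ z s'))) := by
    have h1 : ∀ᶠ s' in nhds s, 0 < w (Υ z s') :=
      hconts.continuousAt.eventually (eventually_gt_nhds hwu)
    have h2 : ∀ᶠ s' in nhds s, 0 < w s' :=
      hw.continuous.continuousAt.eventually (eventually_gt_nhds hws)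
    filter_upwards [h1, h2] with s' h1 h2
    have hdiv : 0 < w s' / w (Υ z s') := div_pos h2 h1
    rw [hΞ, Real.log_mul hz.ne' (Real.rpow_pos_of_pos hdiv _).ne',
      Real.log_rpow hdiv, Real.log_div h2.ne' h1.ne']
  have hgs : HasDerivAt
      (fun s' => Real.log z + (1 / (k : ℝ)) * (Real.log (w s') - Real.log (w (Υ z s'))))
      ((1 / (k : ℝ)) * ((w s)⁻¹ * d -
        (w u)⁻¹ * (D * (1 + (k : ℝ) * z ^ k * β * d)))) s := by
    have hwc : HasDerivAt (fun s' => w (Υ z s'))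
        (D * (1 + (k : ℝ) * z ^ k * β * d)) s :=
      (hw u).hasDerivAt.comp s hΥs
    have hlog2 : HasDerivAt (fun s' => Real.log (w (Υ z s')))
        ((w u)⁻¹ * (D * (1 + (k : ℝ) * z ^ k * β * d))) s :=
      by have h := (Real.hasDerivAt_log hwu.ne').comp s hwc; exact h
    have hlog1 : HasDerivAt (fun s' => Real.log (w s')) ((w s)⁻¹ * d) s :=
      (Real.hasDerivAt_log hws.ne').comp s (hw s).hasDerivAt
    exact (((hlog1.sub hlog2).const_mul _).const_add _)
  have hDs : deriv (fun s' => Real.log (Ξ z s')) s =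
      (1 / (k : ℝ)) * ((w s)⁻¹ * d -
        (w u)⁻¹ * (D * (1 + (k : ℝ) * z ^ k * β * d))) := by
    rw [Filter.EventuallyEq.deriv_eq hevs]; exact hgs.deriv
  rw [hDz, hDs, hΥs.deriv, hΥz.deriv]
  simp only [hkdef, Nat.add_sub_cancel, pow_succ]
  field_simp
  ring
end
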